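/- Let R = R_L ∪ R_T be a linear+trans rule set, 𝕌P the set of pattern definitions computed by the internal rewriting step (Step 3) of the algorithm, and Π_P its Datalog translation. For every CQ Q over the original vocabulary, let Q⁺⁺ be obtained from Q by replacing every atom p(t₁,t₂) with p transitive by the atom p⁺(t₁,t₂). Then for every fact base F: if F, Π_P ⊨ Q⁺⁺, then F, R ⊨ Q. -/

import Mathlib

set_option autoImplicit false

/-! ## First-order vocabulary: terms, atoms, existential rules -/

/-- Terms: variables and constants, both indexed by natural numbers. -/
inductive FTerm where
  | var : ℕ → FTerm
  | const : ℕ → FTerm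
deriving DecidableEq

instance : Inhabited FTerm := ⟨.var 0⟩

def FTerm.equivSum : FTerm ≃ ℕ ⊕ ℕ where
  toFun t := match t with | .var n => .inl n | .const n => .inr n
  invFun s := match s with | .inl n => .var n | .inr n => .const n
  left_inv t := by cases t <;> rfl
  right_inv s := by cases s <;> rfl

instance : Primcodable FTerm := Primcodable.ofEquiv (ℕ ⊕ ℕ) FTerm.equivSum

/-- A (function-free) atom: a predicate applied to a list of terms. -/
structure FAtom where
  pred : ℕ
  args : List FTerm
deriving DecidableEq

def FAtom.equivProd : FAtom ≃ ℕ × List FTerm where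
  toFun a := (a.pred, a.args)
  invFun p := ⟨p.1, p.2⟩
  left_inv a := rfl
  right_inv p := rfl

instance : Primcodable FAtom := Primcodable.ofEquiv (ℕ × List FTerm) FAtom.equivProd

/-- An existential rule `B → H`, given by its body and head (finite conjunctions of atoms).
Variables occurring in the head but not in the body are (implicitly) existentially
quantified; all other variables are universally quantified. -/
structure ERule where
  body : List FAtom
  head : List FAtom
deriving DecidableEq

def ERule.equivProd : ERule ≃ List FAtom × List FAtom where
  toFun r := (r.body, r.head)
  invFun p := ⟨p.1, p.2⟩
  left_inv r := rfl
  right_inv p := rfl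

instance : Primcodable ERule := Primcodable.ofEquiv (List FAtom × List FAtom) ERule.equivProd

/-! ## Semantics -/

/-- A first-order interpretation. -/
structure Interp where
  Dom : Type
  inh : Nonempty Dom
  rel : ℕ → List Dom → Prop
  cst : ℕ → Dom

def FTerm.eval (I : Interp) (ν : ℕ → I.Dom) : FTerm → I.Dom
  | .var n => ν n
  | .const n => I.cst n

def FAtom.sat (I : Interp) (ν : ℕ → I.Dom) (a : FAtom) : Prop :=
  I.rel a.pred (a.args.map (FTerm.eval I ν))

/-- Satisfaction of a Boolean conjunctive query (existential closure of a conjunction). -/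
def satCQ (I : Interp) (Q : List FAtom) : Prop := ∃ ν, ∀ a ∈ Q, a.sat I ν

def satFacts (I : Interp) (F : List FAtom) : Prop := ∀ ν, ∀ a ∈ F, a.sat I ν

def atomsVars (l : List FAtom) : Set ℕ := {v | ∃ a ∈ l, FTerm.var v ∈ a.args}
def atomsTerms (l : List FAtom) : Set FTerm := {t | ∃ a ∈ l, t ∈ a.args}
def atomsPreds (l : List FAtom) : Set ℕ := {q | ∃ a ∈ l, a.pred = q}
def rulesPreds (Rs : List ERule) : Set ℕ := {q | ∃ r ∈ Rs, q ∈ atomsPreds (r.body ++ r.head)}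
def atomsConsts (l : List FAtom) : Set ℕ := {c | FTerm.const c ∈ atomsTerms l}

/-- Frontier variables of a rule. -/
def ERule.frontierV (R : ERule) : Set ℕ := atomsVars R.body ∩ atomsVars R.head
/-- Existential variables of a rule. -/
def ERule.exV (R : ERule) : Set ℕ := atomsVars R.head \ atomsVars R.body

def ERule.sat (I : Interp) (R : ERule) : Prop :=
  ∀ ν, (∀ a ∈ R.body, a.sat I ν) →
    ∃ ν', (∀ v ∈ atomsVars R.body, ν' v = ν v) ∧ ∀ a ∈ R.head, a.sat I ν'

/-- First-order entailment of a Boolean CQ from a knowledge base. -/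
def entails (F : List FAtom) (Rs : List ERule) (Q : List FAtom) : Prop :=
  ∀ I : Interp, satFacts I F → (∀ r ∈ Rs, r.sat I) → satCQ I Q

/-- First-order entailment of a union of Boolean CQs. -/
def entailsUCQ (F : List FAtom) (Rs : List ERule) (Qs : List (List FAtom)) : Prop :=
  ∀ I : Interp, satFacts I F → (∀ r ∈ Rs, r.sat I) → ∃ Q ∈ Qs, satCQ I Q

def FAtom.isGround (a : FAtom) : Prop := ∀ t ∈ a.args, ∃ c, t = FTerm.const c
def isFactBase (F : List FAtom) : Prop := ∀ a ∈ F, a.isGround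

/-! ## Substitutions and piece-unifiers -/

def FTerm.subst (σ : ℕ → FTerm) : FTerm → FTerm
  | .var n => σ n
  | .const n => .const n

def FAtom.subst (σ : ℕ → FTerm) (a : FAtom) : FAtom := ⟨a.pred, a.args.map (FTerm.subst σ)⟩

/-- A piece-unifier of a CQ `Q` with a rule `R`, presented by a unifying substitution `σ`
(obtained from the admissible partition of the terms of `piece ∪ hpiece`):
`σ(piece) = σ(hpiece)` and every term merged with an existential variable of `R`
is a variable of the piece not occurring in the rest of `Q`. -/
structure PieceUnifier (Q : List FAtom) (R : ERule) where
  piece : List FAtom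
  hpiece : List FAtom
  σ : ℕ → FTerm
  piece_ne : piece ≠ []
  piece_sub : ∀ a ∈ piece, a ∈ Q
  hpiece_sub : ∀ a ∈ hpiece, a ∈ R.head
  unif : {x : FAtom | ∃ b ∈ piece, x = b.subst σ} = {x : FAtom | ∃ b ∈ hpiece, x = b.subst σ}
  exCond : ∀ z ∈ R.exV, ∀ t ∈ atomsTerms (piece ++ hpiece),
      FTerm.subst σ t = σ z → t ≠ FTerm.var z →
      ∃ v, t = FTerm.var v ∧ FTerm.var v ∈ atomsTerms piece ∧
        FTerm.var v ∉ atomsTerms (Q.filter (fun a => decide (a ∉ piece)))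

def pieceUnifiable (Q : List FAtom) (R : ERule) : Prop := Nonempty (PieceUnifier Q R)

/-- `R₂` depends on `R₁` if there is a piece-unifier of the body of `R₂` with the head of `R₁`. -/
def ruleDependsOn (R₂ R₁ : ERule) : Prop := pieceUnifiable R₂.body R₁

/-- A rule set is aGRD if its graph of rule dependencies (edge from `R₁` to `R₂`
whenever `R₂` depends on `R₁`) is acyclic. -/
def isAGRD (Rs : List ERule) : Prop :=
  ∀ r ∈ Rs, ¬ Relation.TransGen (fun r₁ r₂ => r₁ ∈ Rs ∧ r₂ ∈ Rs ∧ ruleDependsOn r₂ r₁) r r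

/-- The (classical) direct rewriting of `Q` with `R` w.r.t. a piece-unifier `μ`
is `σ(Q ∖ piece) ∪ σ(body R)` (as a set of atoms). -/
def directRewriting (Q Q' : List FAtom) (R : ERule) : Prop :=
  ∃ μ : PieceUnifier Q R,
    {x : FAtom | x ∈ Q'} =
      {x | ∃ b ∈ Q.filter (fun a => decide (a ∉ μ.piece)), x = b.subst μ.σ} ∪
      {x | ∃ b ∈ R.body, x = b.subst μ.σ}

/-- `Q'` is a rewriting of `Q` w.r.t. the rule set `Rs`: a finite sequence of direct rewritings. -/
def isRewriting (Rs : List ERule) (Q Q' : List FAtom) : Prop :=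
  Relation.ReflTransGen (fun q q' => ∃ r ∈ Rs, directRewriting q q' r) Q Q'

/-! ## Transitivity and linear rules -/

/-- `R` is the transitivity rule `p(x,y) ∧ p(y,z) → p(x,z)` for predicate `p`. -/
def isTransitivityRuleOn (p : ℕ) (R : ERule) : Prop :=
  ∃ x y z : ℕ, x ≠ y ∧ y ≠ z ∧ x ≠ z ∧
    R.body = [⟨p, [.var x, .var y]⟩, ⟨p, [.var y, .var z]⟩] ∧
    R.head = [⟨p, [.var x, .var z]⟩]

def isTransitivityRule (R : ERule) : Prop := ∃ p, isTransitivityRuleOn p R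

/-- A canonical transitivity rule for predicate `p`. -/
def transRule (p : ℕ) : ERule :=
  ⟨[⟨p, [.var 0, .var 1]⟩, ⟨p, [.var 1, .var 2]⟩], [⟨p, [.var 0, .var 2]⟩]⟩

/-- A linear rule: single-atom body and no constants. -/
def isLinearRule (R : ERule) : Prop :=
  (∃ a, R.body = [a]) ∧ ∀ t ∈ atomsTerms (R.body ++ R.head), ∀ c, t ≠ FTerm.const c

/-! ## Patterns, pattern CQs and their instances -/

/-- An element of a pattern conjunctive query: an ordinary atom, a standard pattern
`P[t₁,t₂]`, or a repeatable pattern `P⁺[t₁,t₂]`.  Pattern names are naturals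
(we use the underlying transitive predicate as its own pattern name). -/
inductive PAtom where
  | atom : FAtom → PAtom
  | std : ℕ → FTerm → FTerm → PAtom
  | rep : ℕ → FTerm → FTerm → PAtom
deriving DecidableEq

/-- A pattern conjunctive query (PCQ). -/
abbrev PCQ := List PAtom

/-- A set of pattern definitions `P := a₁ | … | a_k`.  The special variables `#1`, `#2`
of definition atoms are represented by the variables `0` and `1`. -/
abbrev PDefs := List (ℕ × List FAtom)

def defAtoms (P : PDefs) (n : ℕ) : List FAtom := (List.lookup n P).getD []

def PAtom.terms : PAtom → List FTerm
  | .atom a => a.args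
  | .std _ t1 t2 => [t1, t2]
  | .rep _ t1 t2 => [t1, t2]

def pcqTerms (Q : PCQ) : Set FTerm := {t | ∃ p ∈ Q, t ∈ p.terms}
def pcqVars (Q : PCQ) : Set ℕ := {v | FTerm.var v ∈ pcqTerms Q}

def PAtom.subst (σ : ℕ → FTerm) : PAtom → PAtom
  | .atom a => .atom (a.subst σ)
  | .std n t1 t2 => .std n (t1.subst σ) (t2.subst σ)
  | .rep n t1 t2 => .rep n (t1.subst σ) (t2.subst σ)

/-- Instantiating a pattern-definition atom: `#1 ↦ t₁`, `#2 ↦ t₂`, and the remaining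
variables are renamed by `ρ`. -/
def instDefAtom (a : FAtom) (t1 t2 : FTerm) (ρ : ℕ → ℕ) : FAtom :=
  a.subst fun v => if v = 0 then t1 else if v = 1 then t2 else .var (ρ v)

/-- The successive pairs of endpoints of a chain from `t1` to `t2` through fresh
variables `xs`. -/
def chainTerms (t1 t2 : FTerm) : List ℕ → List (FTerm × FTerm)
  | [] => [(t1, t2)]
  | x :: rest => (t1, .var x) :: chainTerms (.var x) t2 rest

/-- All points of a chain from `t1` to `t2` through `xs`. -/
def chainPts (t1 t2 : FTerm) (xs : List ℕ) : List FTerm := t1 :: (xs.map FTerm.var ++ [t2])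

/-- Expansion data for one node of an instantiation tree: unexpanded (`leaf`),
a standard pattern expanded into a definition atom (`stdE`), or a repeatable pattern
expanded into a chain of standard patterns (with internal variables `xs`), each of which
may in turn be expanded into a definition atom (`repE`). -/
inductive PExp where
  | leaf : PExp
  | stdE : FAtom → (ℕ → ℕ) → PExp
  | repE : List ℕ → List (Option (FAtom × (ℕ → ℕ))) → PExp

def expandSlot (n : ℕ) (t1 t2 : FTerm) : Option (FAtom × (ℕ → ℕ)) → PAtom
  | none => .std n t1 t2
  | some (a, ρ) => .atom (instDefAtom a t1 t2 ρ)

def expandNode : PAtom → PExp → PCQ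
  | .std n t1 t2, .stdE a ρ => [.atom (instDefAtom a t1 t2 ρ)]
  | .rep n t1 t2, .repE xs es =>
      ((chainTerms t1 t2 xs).zip es).map fun pe => expandSlot n pe.1.1 pe.1.2 pe.2
  | p, _ => [p]

def PExpWF (P : PDefs) : PAtom → PExp → Prop
  | .atom _, e => e = .leaf
  | .std n _ _, e => e = .leaf ∨ ∃ a ρ, e = .stdE a ρ ∧ a ∈ defAtoms P n ∧ Function.Injective ρ
  | .rep n _ _, e => e = .leaf ∨ ∃ xs es, e = .repE xs es ∧ es.length = xs.length + 1 ∧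
      xs.Nodup ∧ ∀ o ∈ es, ∀ a ρ, o = some (a, ρ) → a ∈ defAtoms P n ∧ Function.Injective ρ

def FAtom.varList (a : FAtom) : List ℕ :=
  a.args.filterMap fun t => match t with | .var v => some v | .const _ => none

def slotNewVars : Option (FAtom × (ℕ → ℕ)) → List ℕ
  | none => []
  | some (a, ρ) => (a.varList.filter fun v => decide (v ≠ 0 ∧ v ≠ 1)).map ρ

def PExp.newVars : PExp → List ℕ
  | .leaf => []
  | .stdE a ρ => (a.varList.filter fun v => decide (v ≠ 0 ∧ v ≠ 1)).map ρ
  | .repE xs es => xs ++ es.flatMap slotNewVars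

/-- An instantiation of the PCQ `Q` w.r.t. the pattern definitions `P`:
a well-formed choice of expansions for the elements of `Q`, whose freshly introduced
variables are pairwise distinct and do not occur in `Q`. -/
structure Instn (P : PDefs) (Q : PCQ) where
  exps : List PExp
  len : exps.length = Q.length
  wf : ∀ (i : ℕ) (hq : i < Q.length) (he : i < exps.length),
    PExpWF P (Q.get ⟨i, hq⟩) (exps.get ⟨i, he⟩)
  fresh_nodup : ((exps.map PExp.newVars).flatten).Nodup
  fresh : ∀ v ∈ (exps.map PExp.newVars).flatten, v ∉ pcqVars Q

/-- The instance associated with an instantiation. -/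
def Instn.result {P : PDefs} {Q : PCQ} (T : Instn P Q) : PCQ :=
  (Q.zip T.exps).flatMap fun pe => expandNode pe.1 pe.2

def isFullPCQ (Q : PCQ) : Prop := ∀ p ∈ Q, ∃ a, p = PAtom.atom a

def IsInstanceOf (P : PDefs) (Q Q' : PCQ) : Prop := ∃ T : Instn P Q, T.result = Q'
def IsFullInstanceOf (P : PDefs) (Q Q' : PCQ) : Prop := IsInstanceOf P Q Q' ∧ isFullPCQ Q'

def PCQ.toCQ (Q : PCQ) : List FAtom :=
  Q.filterMap fun p => match p with | .atom a => some a | _ => none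

/-! ## Datalog and UCQ translations -/

/-- The Datalog translation `Π_P` of a set of pattern definitions: for each definition of
pattern `P` (for transitive predicate `p`), the transitivity rule for the fresh predicate
`p⁺ = plus p` and one rule `aᵢ → p⁺(#1,#2)` per definition atom. -/
def datalogOfDefs (plus : ℕ → ℕ) (P : PDefs) : List ERule :=
  P.flatMap fun pd =>
    transRule (plus pd.1) :: pd.2.map fun a => ⟨[a], [⟨plus pd.1, [.var 0, .var 1]⟩]⟩

/-- The CQ obtained from a PCQ by replacing each pattern `P⁺[t₁,t₂]` (resp. `P[t₁,t₂]`)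
by the atom `p⁺(t₁,t₂)`. -/
def pcqToCQPlus (plus : ℕ → ℕ) (Q : PCQ) : List FAtom :=
  Q.map fun p => match p with
    | .atom a => a
    | .std n t1 t2 => ⟨plus n, [t1, t2]⟩
    | .rep n t1 t2 => ⟨plus n, [t1, t2]⟩

/-- The initial pattern definitions: `P := p(#1,#2)` for each transitive predicate `p`. -/
def initDefs (tp : List ℕ) : PDefs := tp.map fun p => (p, [⟨p, [.var 0, .var 1]⟩])

/-- `Q⁺`: replace every atom `p(t₁,t₂)` with `p` transitive by the repeatable
pattern `P⁺[t₁,t₂]`. -/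
def toPCQ (tp : List ℕ) (Q : List FAtom) : PCQ :=
  Q.map fun a =>
    if a.pred ∈ tp then
      match a.args with
      | [u, v] => PAtom.rep a.pred u v
      | _ => PAtom.atom a
    else PAtom.atom a

/-- `Q⁺⁺`: replace every atom `p(t₁,t₂)` with `p` transitive by `p⁺(t₁,t₂)`. -/
def toPlusCQ (plus : ℕ → ℕ) (tp : List ℕ) (Q : List FAtom) : List FAtom :=
  Q.map fun a => if a.pred ∈ tp then ⟨plus a.pred, a.args⟩ else a

/-! ## Rules of `R_L⁺` -/

/-- A rule of `R_L⁺`: the body is a single atom or a single repeatable pattern. -/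
structure PRule where
  pbody : PAtom
  head : List FAtom

def PAtom.varList (p : PAtom) : List ℕ :=
  p.terms.filterMap fun t => match t with | .var v => some v | .const _ => none

def PRule.exV (R : PRule) : Set ℕ := atomsVars R.head \ {v | v ∈ R.pbody.varList}

/-- The `R_L⁺` translation of a linear rule: a transitive body atom is replaced by the
corresponding repeatable pattern. -/
def toPRule (tp : List ℕ) (R : ERule) : PRule :=
  match R.body with
  | [a] =>
    ⟨if a.pred ∈ tp then
        match a.args with
        | [u, v] => PAtom.rep a.pred u v
        | _ => PAtom.atom a
      else PAtom.atom a, R.head⟩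
  | _ => ⟨PAtom.atom ⟨0, []⟩, R.head⟩

def pruleNoConst (R : PRule) : Prop :=
  (∀ t ∈ R.pbody.terms, ∀ c, t ≠ FTerm.const c) ∧
  ∀ t ∈ atomsTerms R.head, ∀ c, t ≠ FTerm.const c

/-- `R` is (the `R_L⁺` version of) a linear rule w.r.t. the transitive predicates `tp`. -/
def isRLPlusRule (tp : List ℕ) (R : PRule) : Prop :=
  pruleNoConst R ∧ (∃ h, R.head = [h]) ∧
  ((∃ a, R.pbody = PAtom.atom a ∧ a.pred ∉ tp) ∨
   (∃ p t1 t2, R.pbody = PAtom.rep p t1 t2 ∧ p ∈ tp))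

/-! ## Unifiers of PCQs -/

def pcqRemove (ctx : PCQ) (Qp : List FAtom) : PCQ :=
  ctx.filter fun p => decide (∀ a ∈ Qp, p ≠ PAtom.atom a)

/-- Condition 2 of piece-unifiers, relative to a PCQ context `ctx`:
every term merged with an existential variable of `R` is a variable of the unified part
`Qp` that does not occur in the rest of `ctx`. -/
def exCondOn (R : PRule) (σ : ℕ → FTerm) (ctx : PCQ) (Qp Hp : List FAtom) : Prop :=
  ∀ z ∈ R.exV, ∀ t ∈ atomsTerms (Qp ++ Hp),
    FTerm.subst σ t = σ z → t ≠ FTerm.var z →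
    ∃ v, t = FTerm.var v ∧ FTerm.var v ∈ atomsTerms Qp ∧
      FTerm.var v ∉ pcqTerms (pcqRemove ctx Qp)

/-- A (single-piece) unifier of the PCQ `ctx` with the rule `R`: a piece-unifier whose
unified query atoms `Qp` are ordinary atoms of `ctx`. -/
structure CtxUnifier (ctx : PCQ) (R : PRule) where
  Qp : List FAtom
  Hp : List FAtom
  σ : ℕ → FTerm
  Qp_ne : Qp ≠ []
  Qp_sub : ∀ a ∈ Qp, PAtom.atom a ∈ ctx
  Hp_sub : ∀ a ∈ Hp, a ∈ R.head
  unif : {x : FAtom | ∃ b ∈ Qp, x = b.subst σ} = {x : FAtom | ∃ b ∈ Hp, x = b.subst σ}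
  exCond : exCondOn R σ ctx Qp Hp
  singlePiece : ¬ ∃ Qs : List FAtom, Qs ≠ [] ∧ (∀ a ∈ Qs, a ∈ Qp) ∧
      {a : FAtom | a ∈ Qs} ⊂ {a : FAtom | a ∈ Qp} ∧ exCondOn R σ ctx Qs Hp

/-- A unifier of the PCQ `Q` with `R`: a unifier of one of its instances. -/
structure PUnifier (P : PDefs) (Q : PCQ) (R : PRule) where
  T : Instn P Q
  u : CtxUnifier T.result R

/-- The atoms produced at the successive slots of an expanded repeatable pattern. -/
def slotAtoms (n : ℕ) (t1 t2 : FTerm) (xs : List ℕ)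
    (es : List (Option (FAtom × (ℕ → ℕ)))) : List (Option FAtom) :=
  ((chainTerms t1 t2 xs).zip es).map fun pe =>
    pe.2.map fun aρ => instDefAtom aρ.1 pe.1.1 pe.1.2 aρ.2

/-- `μ` is internal to the repeatable pattern occurring at position `i` of `Q`, with
relevant slots `[s,e)`; the external terms are the chain points at `s` and `e`, and they
are neither unified together nor with an existential variable of `R`. -/
def PUnifier.internalData {P : PDefs} {Q : PCQ} {R : PRule} (μ : PUnifier P Q R)
    (i n : ℕ) (t1 t2 : FTerm) (xs : List ℕ) (es : List (Option (FAtom × (ℕ → ℕ))))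
    (s e : ℕ) : Prop :=
  ∃ (hq : i < Q.length) (he : i < μ.T.exps.length),
    Q.get ⟨i, hq⟩ = PAtom.rep n t1 t2 ∧
    μ.T.exps.get ⟨i, he⟩ = PExp.repE xs es ∧
    (∀ a ∈ μ.u.Qp, some a ∈ slotAtoms n t1 t2 xs es) ∧
    s < e ∧ e ≤ xs.length + 1 ∧
    (∀ j < xs.length + 1,
      (∃ a ∈ μ.u.Qp, (slotAtoms n t1 t2 xs es)[j]? = some (some a)) ↔ (s ≤ j ∧ j < e)) ∧
    FTerm.subst μ.u.σ ((chainPts t1 t2 xs).getD s default) ≠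
      FTerm.subst μ.u.σ ((chainPts t1 t2 xs).getD e default) ∧
    ∀ z ∈ R.exV,
      FTerm.subst μ.u.σ ((chainPts t1 t2 xs).getD s default) ≠ μ.u.σ z ∧
      FTerm.subst μ.u.σ ((chainPts t1 t2 xs).getD e default) ≠ μ.u.σ z

def PUnifier.isInternal {P : PDefs} {Q : PCQ} {R : PRule} (μ : PUnifier P Q R) : Prop :=
  ∃ i n t1 t2 xs es s e, μ.internalData i n t1 t2 xs es s e

def PUnifier.isExternal {P : PDefs} {Q : PCQ} {R : PRule} (μ : PUnifier P Q R) : Prop :=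
  ¬ μ.isInternal

/-! ## Instantiations of interest -/

/-- An instantiation of interest w.r.t. a rule with head predicate `p` of arity `arity`:
every repeatable pattern whose definition contains `n_i > 0` atoms with predicate `p` is
expanded into `k` standard patterns (`0 < k ≤ min(arity, n_i) + 2`), each of which is
expanded into a definition atom with predicate `p`; other patterns are left unexpanded. -/
def IsIOI (P : PDefs) (p arity : ℕ) {Q : PCQ} (T : Instn P Q) : Prop :=
  ∀ (i : ℕ) (hq : i < Q.length) (he : i < T.exps.length),
    (∀ n t1 t2, Q.get ⟨i, hq⟩ = PAtom.std n t1 t2 → T.exps.get ⟨i, he⟩ = PExp.leaf) ∧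
    (∀ n t1 t2, Q.get ⟨i, hq⟩ = PAtom.rep n t1 t2 →
      (((defAtoms P n).filter fun a => decide (a.pred = p)) = [] →
        T.exps.get ⟨i, he⟩ = PExp.leaf) ∧
      (((defAtoms P n).filter fun a => decide (a.pred = p)) ≠ [] →
        ∃ xs es, T.exps.get ⟨i, he⟩ = PExp.repE xs es ∧
          xs.length + 1 ≤
            min arity ((defAtoms P n).filter fun a => decide (a.pred = p)).length + 2 ∧
          ∀ o ∈ es, ∃ a ρ, o = some (a, ρ) ∧ a.pred = p))

def IsInstanceOfInterest (P : PDefs) (p arity : ℕ) (Q Q' : PCQ) : Prop :=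
  ∃ T : Instn P Q, IsIOI P p arity T ∧ T.result = Q'

/-- `μ'` is more general than `μ`. -/
def moreGeneralU {P : PDefs} {Q : PCQ} {R : PRule} (μ' μ : PUnifier P Q R) : Prop :=
  ∃ h : ℕ → FTerm,
    (∀ a ∈ μ'.u.Qp, ∃ b ∈ μ.u.Qp, (a.subst μ'.u.σ).subst h = b.subst μ.u.σ) ∧
    ∀ x ∈ atomsTerms (μ'.u.Qp ++ R.head), ∀ y ∈ atomsTerms (μ'.u.Qp ++ R.head),
      FTerm.subst μ'.u.σ x = FTerm.subst μ'.u.σ y →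
      FTerm.subst μ.u.σ (FTerm.subst h x) = FTerm.subst μ.u.σ (FTerm.subst h y)

/-! ## Rewriting operations, isomorphisms, homomorphisms -/

/-- The classical direct rewriting `σ(ctx ∖ Qp) ∪ σ(B)` of a PCQ with a rule of `R_L⁺`. -/
def classicalRewritePCQ (ctx : PCQ) (Qp : List FAtom) (σ : ℕ → FTerm) (R : PRule) : PCQ :=
  (pcqRemove ctx Qp).map (PAtom.subst σ) ++ [R.pbody.subst σ]

def CQIso (Q1 Q2 : List FAtom) : Prop :=
  ∃ f : ℕ → ℕ, Function.Bijective f ∧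
    {a : FAtom | a ∈ Q2} = {a | ∃ b ∈ Q1, a = b.subst fun v => FTerm.var (f v)}

def PCQIso (Q1 Q2 : PCQ) : Prop :=
  ∃ f : ℕ → ℕ, Function.Bijective f ∧
    {p : PAtom | p ∈ Q2} = {p | ∃ q ∈ Q1, p = q.subst fun v => FTerm.var (f v)}

def CQHom (Q1 Q2 : List FAtom) : Prop := ∃ σ, ∀ a ∈ Q1, a.subst σ ∈ Q2

/-- `(Q1,P1)` is more general than `(Q2,P2)`. -/
def PCQMoreGeneral (P1 : PDefs) (Q1 : PCQ) (P2 : PDefs) (Q2 : PCQ) : Prop :=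
  ∀ Q2', IsFullInstanceOf P2 Q2 Q2' →
    ∃ Q1', IsFullInstanceOf P1 Q1 Q1' ∧ CQHom Q1'.toCQ Q2'.toCQ

/-! ## Minimally-unifiable instances and external direct rewritings of PCQs -/

inductive RepCase where
  | keep | c1 | c2 | c3 | c4
deriving DecidableEq

/-- A fully expanded chain for pattern `n` from `u` to `v`, producing the atoms `X`. -/
def IsChainExp (P : PDefs) (n : ℕ) (u v : FTerm) (X : List FAtom) : Prop :=
  ∃ (xs : List ℕ) (es : List (Option (FAtom × (ℕ → ℕ)))),
    es.length = xs.length + 1 ∧ (∀ o ∈ es, o ≠ none) ∧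
    (∀ o ∈ es, ∀ a ρ, o = some (a, ρ) → a ∈ defAtoms P n ∧ Function.Injective ρ) ∧
    X = ((chainTerms u v xs).zip es).filterMap fun pe =>
      pe.2.map fun aρ => instDefAtom aρ.1 pe.1.1 pe.1.2 aρ.2

/-- Replacement of one element of a PCQ in a minimally-unifiable instance:
either it is kept, or (for a repeatable pattern used by the unifier) it is replaced
following one of the four cases; `X` is the chain of atoms used by the unifier. -/
inductive ElemRepl (P : PDefs) : PAtom → RepCase → PCQ → List FAtom → Prop
  | keep (p : PAtom) : ElemRepl P p .keep [p] []
  | case1 (n : ℕ) (t1 t2 : FTerm) (x1 x2 : ℕ) (X : List FAtom) :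
      IsChainExp P n (.var x1) (.var x2) X →
      ElemRepl P (.rep n t1 t2) .c1
        (PAtom.rep n t1 (.var x1) :: X.map PAtom.atom ++ [PAtom.rep n (.var x2) t2]) X
  | case2 (n : ℕ) (t1 t2 : FTerm) (x1 : ℕ) (X : List FAtom) :
      IsChainExp P n (.var x1) t2 X →
      ElemRepl P (.rep n t1 t2) .c2 (PAtom.rep n t1 (.var x1) :: X.map PAtom.atom) X
  | case3 (n : ℕ) (t1 t2 : FTerm) (x2 : ℕ) (X : List FAtom) :
      IsChainExp P n t1 (.var x2) X →
      ElemRepl P (.rep n t1 t2) .c3 (X.map PAtom.atom ++ [PAtom.rep n (.var x2) t2]) X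
  | case4 (n : ℕ) (t1 t2 : FTerm) (X : List FAtom) :
      IsChainExp P n t1 t2 X →
      ElemRepl P (.rep n t1 t2) .c4 (X.map PAtom.atom) X

/-- A minimally-unifiable instance of `(Q,P)` w.r.t. an external unifier with rule `R`,
together with the unifier itself. -/
structure MinUnif (P : PDefs) (Q : PCQ) (R : PRule) where
  repl : List (RepCase × PCQ × List FAtom)
  len : repl.length = Q.length
  elemOK : ∀ (i : ℕ) (hq : i < Q.length) (hr : i < repl.length),
    ElemRepl P (Q.get ⟨i, hq⟩) (repl.get ⟨i, hr⟩).1 (repl.get ⟨i, hr⟩).2.1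
      (repl.get ⟨i, hr⟩).2.2
  u : CtxUnifier ((repl.map fun c => c.2.1).flatten) R
  usedAll : ∀ c ∈ repl, ∀ a ∈ c.2.2, a ∈ u.Qp
  onlyX : ∀ a ∈ u.Qp, (∃ c ∈ repl, a ∈ c.2.2) ∨ PAtom.atom a ∈ Q

def MinUnif.Qm {P : PDefs} {Q : PCQ} {R : PRule} (M : MinUnif P Q R) : PCQ :=
  (M.repl.map fun c => c.2.1).flatten

def MinUnif.caseAt {P : PDefs} {Q : PCQ} {R : PRule} (M : MinUnif P Q R)
    (i : ℕ) (h : i < Q.length) : RepCase :=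
  (M.repl.get ⟨i, lt_of_lt_of_eq h M.len.symm⟩).1

def MinUnif.XAt {P : PDefs} {Q : PCQ} {R : PRule} (M : MinUnif P Q R)
    (i : ℕ) (h : i < Q.length) : List FAtom :=
  (M.repl.get ⟨i, lt_of_lt_of_eq h M.len.symm⟩).2.2

/-- The direct rewriting of the PCQ determined by a minimally-unifiable instance. -/
def MinUnif.rewrite {P : PDefs} {Q : PCQ} {R : PRule} (M : MinUnif P Q R) : PCQ :=
  classicalRewritePCQ M.Qm M.u.Qp M.u.σ R

/-- `Q'` is a direct rewriting of `Q` w.r.t. `P` and `R`. -/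
def IsDirectPCQRewriting (P : PDefs) (R : PRule) (Q Q' : PCQ) : Prop :=
  ∃ M : MinUnif P Q R, Q' = M.rewrite

/-- First kind of excluded minimally-unifiable instance. -/
def MinUnif.excludedA {P : PDefs} {Q : PCQ} {R : PRule} (M : MinUnif P Q R) : Prop :=
  ∃ (i : ℕ) (hq : i < Q.length), ∃ n t1 t2,
    Q.get ⟨i, hq⟩ = PAtom.rep n t1 t2 ∧
    (∀ a ∈ M.u.Qp, a ∈ M.XAt i hq) ∧
    FTerm.subst M.u.σ t1 = FTerm.subst M.u.σ t2 ∧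
    (M.caseAt i hq = RepCase.c1 ∨ M.caseAt i hq = RepCase.c2 ∨ M.caseAt i hq = RepCase.c3)

def occursOnlyAsRepSnd (Q : PCQ) (t : FTerm) : Prop :=
  t ∈ pcqTerms Q ∧ ∀ p ∈ Q, t ∈ p.terms → ∃ n t1, p = PAtom.rep n t1 t ∧ t1 ≠ t

def occursOnlyAsRepFst (Q : PCQ) (t : FTerm) : Prop :=
  t ∈ pcqTerms Q ∧ ∀ p ∈ Q, t ∈ p.terms → ∃ n t2, p = PAtom.rep n t t2 ∧ t2 ≠ t

/-- Second kind of excluded minimally-unifiable instance. -/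
def MinUnif.excludedB {P : PDefs} {Q : PCQ} {R : PRule} (M : MinUnif P Q R) : Prop :=
  (∀ a ∈ M.u.Qp, ∃ c ∈ M.repl, a ∈ c.2.2) ∧
  ∃ t : FTerm, (∃ z ∈ R.exV, FTerm.subst M.u.σ t = M.u.σ z) ∧
    ((occursOnlyAsRepSnd Q t ∧ ∀ (i : ℕ) (hq : i < Q.length), ∀ n t1,
        Q.get ⟨i, hq⟩ = PAtom.rep n t1 t → M.caseAt i hq = RepCase.c2) ∨
     (occursOnlyAsRepFst Q t ∧ ∀ (i : ℕ) (hq : i < Q.length), ∀ n t2,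
        Q.get ⟨i, hq⟩ = PAtom.rep n t t2 → M.caseAt i hq = RepCase.c3))

def MinUnif.nonExcluded {P : PDefs} {Q : PCQ} {R : PRule} (M : MinUnif P Q R) : Prop :=
  ¬ M.excludedA ∧ ¬ M.excludedB

/-! ## Direct rewritings of pattern definitions (internal rewriting) -/

def updateDef (P : PDefs) (n : ℕ) (new : List FAtom) : PDefs :=
  P.map fun pd => if pd.1 = n then (pd.1, pd.2 ++ new) else pd

def replExt (us ue : FTerm) (t : FTerm) : FTerm :=
  if t = us then .var 0 else if t = ue then .var 1 else t

def FAtom.mapTerms (f : FTerm → FTerm) (a : FAtom) : FAtom := ⟨a.pred, a.args.map f⟩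

def swap01 (t : FTerm) : FTerm :=
  if t = FTerm.var 0 then FTerm.var 1 else if t = FTerm.var 1 then FTerm.var 0 else t

/-- The atoms added to a pattern definition by an internal rewriting step: `B'` is
obtained from `σ(B)` by replacing the external terms by `#1`, `#2`; if `B'` is an atom it
is added itself, and if it is a repeatable pattern `S⁺[#1,#2]` (resp. `S⁺[#2,#1]`) the
atoms of `S`'s definition (resp. their `#1/#2`-swaps) are added. -/
def newAtomsFor (P : PDefs) (R : PRule) (σ : ℕ → FTerm) (us ue : FTerm) : List FAtom :=
  match R.pbody with
  | .atom a => [(a.subst σ).mapTerms (replExt us ue)]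
  | .rep s t1 t2 =>
      if replExt us ue (FTerm.subst σ t1) = FTerm.var 0 ∧
         replExt us ue (FTerm.subst σ t2) = FTerm.var 1
      then defAtoms P s
      else (defAtoms P s).map (FAtom.mapTerms swap01)
  | .std _ _ _ => []

/-- `P'` is a direct rewriting of the pattern definitions `P` w.r.t. pattern name `n` and
rule `R ∈ R_L⁺`: obtained from an internal unifier (with a substitution preserving the
external terms) of an instance of interest of `P⁺[x,y]` with `R`. -/
def IsDefRewriting (P : PDefs) (n : ℕ) (R : PRule) (P' : PDefs) : Prop :=
  ∃ hd : FAtom, R.head = [hd] ∧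
  ∃ μ : PUnifier P [PAtom.rep n (.var 0) (.var 1)] R,
    IsIOI P hd.pred hd.args.length μ.T ∧
    ∃ n' t1 t2 xs es s e, μ.internalData 0 n' t1 t2 xs es s e ∧
      FTerm.subst μ.u.σ ((chainPts t1 t2 xs).getD s default) =
        (chainPts t1 t2 xs).getD s default ∧
      FTerm.subst μ.u.σ ((chainPts t1 t2 xs).getD e default) =
        (chainPts t1 t2 xs).getD e default ∧
      P' = updateDef P n (newAtomsFor P R μ.u.σ
        ((chainPts t1 t2 xs).getD s default) ((chainPts t1 t2 xs).getD e default))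

/-! ## Saturations (the query rewriting algorithm) -/

/-- Isomorphism of pattern-definition atoms (fixing the special variables `#1`, `#2`). -/
def isoDefAtom (a b : FAtom) : Prop :=
  ∃ f : ℕ → ℕ, Function.Bijective f ∧ f 0 = 0 ∧ f 1 = 1 ∧
    b = a.subst fun v => FTerm.var (f v)

def DefStep (RL : List PRule) (P P' : PDefs) : Prop :=
  ∃ n R, R ∈ RL ∧ IsDefRewriting P n R P'

/-- `Pf` is the saturated set of pattern definitions computed by Step 3: reachable from
the initial definitions, and closed (up to isomorphism) under direct rewritings. -/
def IsSaturatedDefs (tp : List ℕ) (RL : List PRule) (Pf : PDefs) : Prop :=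
  Relation.ReflTransGen (DefStep RL) (initDefs tp) Pf ∧
  ∀ P', DefStep RL Pf P' → ∀ n, ∀ a ∈ defAtoms P' n, ∃ b ∈ defAtoms Pf n, isoDefAtom a b

def PCQStep (P : PDefs) (RL : List PRule) (Q Q' : PCQ) : Prop :=
  ∃ R ∈ RL, IsDirectPCQRewriting P R Q Q'

/-- `UQ` is the (possibly infinite) set of PCQs computed by Step 5: contains `Q0`, all
members reachable from `Q0`, and closed (up to isomorphism) under direct rewritings. -/
def IsSaturatedUQ (P : PDefs) (RL : List PRule) (Q0 : PCQ) (UQ : Set PCQ) : Prop :=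
  Q0 ∈ UQ ∧ (∀ Q ∈ UQ, Relation.ReflTransGen (PCQStep P RL) Q0 Q) ∧
  ∀ Q ∈ UQ, ∀ Q', PCQStep P RL Q Q' → ∃ Q'' ∈ UQ, PCQIso Q' Q''

/-- One non-excluded external direct rewriting step (the modified algorithm). -/
def PCQStepNE (P : PDefs) (RL : List PRule) (Q Q' : PCQ) : Prop :=
  ∃ R ∈ RL, ∃ M : MinUnif P Q R, M.nonExcluded ∧ Q' = M.rewrite

/-- A finite saturated set of PCQs for the modified (non-excluded) rewriting. -/
def IsSaturatedUQListNE (P : PDefs) (RL : List PRule) (Q0 : PCQ) (UQ : List PCQ) : Prop :=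
  Q0 ∈ UQ ∧ (∀ Q ∈ UQ, Relation.ReflTransGen (PCQStepNE P RL) Q0 Q) ∧
  ∀ Q ∈ UQ, ∀ Q', PCQStepNE P RL Q Q' → ∃ Q'' ∈ UQ, PCQIso Q' Q''

/-! ## Safety -/

/-- `q` is a specialization of the binary predicate `p` on positions `{I,J}`. -/
inductive IsSpec (RL : List ERule) (p : ℕ) : ℕ → Set ℕ → Set ℕ → Prop
  | direct (r : ERule) (q : ℕ) (u : List FTerm) (x y : ℕ) (I J : Set ℕ) :
      r ∈ RL → r.body = [⟨q, u⟩] → r.head = [⟨p, [.var x, .var y]⟩] → x ≠ y →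
      I = {i | u[i]? = some (.var x)} → I.Nonempty →
      J = {j | u[j]? = some (.var y)} → J.Nonempty →
      IsSpec RL p q I J
  | step (r : ERule) (q r' : ℕ) (u v : List FTerm) (K L I J : Set ℕ) :
      r ∈ RL → r.body = [⟨q, u⟩] → r.head = [⟨r', v⟩] →
      IsSpec RL p r' K L →
      I = {i | ∃ k ∈ K, ∃ t, v[k]? = some t ∧ u[i]? = some t} → I.Nonempty →
      J = {j | ∃ l ∈ L, ∃ t, v[l]? = some t ∧ u[j]? = some t} → J.Nonempty →
      IsSpec RL p q I J

/-- The safety condition for a linear+trans rule set (with transitive predicates `tp`). -/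
def isSafe (RL : List ERule) (tp : List ℕ) : Prop :=
  ∀ q : ℕ, (∃ p ∈ tp, ∃ I J, IsSpec RL p q I J) →
    ∃ i j : ℕ, i ≠ j ∧ ∀ p ∈ tp, ∀ I J, IsSpec RL p q I J →
      (i ∈ I ∧ j ∈ J) ∨ (i ∈ J ∧ j ∈ I)

/-! ## Miscellaneous -/

def transPredsOf (RT : List ERule) (tp : List ℕ) : Prop :=
  ∀ p, p ∈ tp ↔ ∃ r ∈ RT, isTransitivityRuleOn p r

def pdefsPreds (P : PDefs) : Set ℕ :=
  {q | ∃ pd ∈ P, q = pd.1 ∨ ∃ a ∈ pd.2, a.pred = q}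

def pcqPreds (Q : PCQ) : Set ℕ :=
  {q | ∃ p ∈ Q, (∃ a : FAtom, p = PAtom.atom a ∧ a.pred = q) ∨
    (∃ n t1 t2, (p = PAtom.std n t1 t2 ∨ p = PAtom.rep n t1 t2) ∧ n = q)}

/-! ### Auxiliary development for the soundness theorem -/

section InternalSoundAux

open Classical

/-! #### Basic term and atom lemmas -/

lemma IS_map_eval_subst (I : Interp) (θ : ℕ → I.Dom) (σ : ℕ → FTerm) (l : List FTerm) :
    (l.map (FTerm.subst σ)).map (FTerm.eval I θ)
      = l.map (FTerm.eval I (fun v => FTerm.eval I θ (σ v))) := by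
  rw [List.map_map]
  apply List.map_congr_left
  intro t _
  cases t <;> rfl

lemma IS_sat_subst (I : Interp) (θ : ℕ → I.Dom) (σ : ℕ → FTerm) (a : FAtom) :
    (a.subst σ).sat I θ ↔ a.sat I (fun v => FTerm.eval I θ (σ v)) := by
  show I.rel a.pred _ ↔ I.rel a.pred _
  rw [show (a.subst σ).args = a.args.map (FTerm.subst σ) from rfl,
    IS_map_eval_subst]

lemma IS_subst_pred (σ : ℕ → FTerm) (a : FAtom) : (a.subst σ).pred = a.pred := rfl

lemma IS_subst_args (σ : ℕ → FTerm) (a : FAtom) :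
    (a.subst σ).args = a.args.map (FTerm.subst σ) := rfl

lemma IS_mapTerms_pred (f : FTerm → FTerm) (a : FAtom) : (a.mapTerms f).pred = a.pred := rfl

lemma IS_mapTerms_args (f : FTerm → FTerm) (a : FAtom) :
    (a.mapTerms f).args = a.args.map f := rfl

lemma IS_subst_mcomp (σ σ' : ℕ → FTerm) (m : FTerm → FTerm)
    (hσ' : ∀ x, σ' x = m (σ x)) (a : FAtom)
    (hnc : ∀ t ∈ a.args, ∀ k, t ≠ FTerm.const k) :
    a.subst σ' = (a.subst σ).mapTerms m := by
  unfold FAtom.subst FAtom.mapTerms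
  simp only [List.map_map]
  congr 1
  apply List.map_congr_left
  intro t ht
  cases t with
  | var v => simp [FTerm.subst, Function.comp, hσ']
  | const k => exact absurd rfl (hnc _ ht k)

/-! #### lookup / updateDef lemmas -/

lemma IS_lookup_updateDef (P : PDefs) (n : ℕ) (L : List FAtom) (k : ℕ) :
    List.lookup k (updateDef P n L) =
      (List.lookup k P).map (fun l => if k = n then l ++ L else l) := by
  induction P with
  | nil => rfl
  | cons pd rest ih =>
    obtain ⟨a, l⟩ := pd
    have hstep : updateDef ((a, l) :: rest) n L
        = (if a = n then (a, l ++ L) else (a, l)) :: updateDef rest n L := rfl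
    by_cases han : a = n
    · rw [hstep, if_pos han]
      by_cases hak : k = a
      · subst hak; subst han
        simp [List.lookup_cons]
      · have hbeq : (k == a) = false := by simp [hak]
        simp only [List.lookup_cons, hbeq]
        exact ih
    · rw [hstep, if_neg han]
      by_cases hak : k = a
      · subst hak
        have hkn : ¬ k = n := han
        simp [List.lookup_cons, hkn]
      · have hbeq : (k == a) = false := by simp [hak]
        simp only [List.lookup_cons, hbeq]
        exact ih

lemma IS_defAtoms_updateDef_self (P : PDefs) (n : ℕ) (L : List FAtom)
    (h : defAtoms P n ≠ []) :
    defAtoms (updateDef P n L) n = defAtoms P n ++ L := by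
  unfold defAtoms at *
  rw [IS_lookup_updateDef]
  cases hl : List.lookup n P with
  | none => rw [hl] at h; simp at h
  | some l => simp [hl]

lemma IS_defAtoms_updateDef_sublist (P : PDefs) (n : ℕ) (L : List FAtom) (k : ℕ) :
    (defAtoms P k).Sublist (defAtoms (updateDef P n L) k) := by
  unfold defAtoms
  rw [IS_lookup_updateDef]
  cases hl : List.lookup k P with
  | none => simp
  | some l =>
    by_cases hkn : k = n <;> simp [hkn]

lemma IS_lookup_mem {P : PDefs} {k : ℕ} {l : List FAtom}
    (h : List.lookup k P = some l) : (k, l) ∈ P := by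
  induction P with
  | nil => simp [List.lookup] at h
  | cons pd rest ih =>
    obtain ⟨a, l'⟩ := pd
    rw [List.lookup_cons] at h
    by_cases hak : k = a
    · subst hak; simp at h; simp [h]
    · have hbeq : (k == a) = false := by simp [hak]
      rw [hbeq] at h
      exact List.mem_cons_of_mem _ (ih h)

lemma IS_mem_defAtoms {P : PDefs} {k : ℕ} {a : FAtom} (h : a ∈ defAtoms P k) :
    ∃ l, (k, l) ∈ P ∧ a ∈ l := by
  unfold defAtoms at h
  cases hl : List.lookup k P with
  | none => rw [hl] at h; simp at h
  | some l => rw [hl] at h; exact ⟨l, IS_lookup_mem hl, h⟩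

lemma IS_mem_updateDef {P : PDefs} {n : ℕ} {L : List FAtom} {pd : ℕ × List FAtom}
    (h : pd ∈ updateDef P n L) :
    ∃ pd₀ ∈ P, pd.1 = pd₀.1 ∧ (pd.2 = pd₀.2 ∨ (pd₀.1 = n ∧ pd.2 = pd₀.2 ++ L)) := by
  unfold updateDef at h
  rw [List.mem_map] at h
  obtain ⟨pd₀, hpd₀, heq⟩ := h
  by_cases hn : pd₀.1 = n
  · rw [if_pos hn] at heq; exact ⟨pd₀, hpd₀, by rw [← heq], Or.inr ⟨hn, by rw [← heq]⟩⟩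
  · rw [if_neg hn] at heq; exact ⟨pd₀, hpd₀, by rw [← heq], Or.inl (by rw [← heq])⟩

/-! #### Chain lemmas -/

lemma IS_chainPts_cons (t1 t2 : FTerm) (x : ℕ) (xs : List ℕ) :
    chainPts t1 t2 (x :: xs) = t1 :: chainPts (.var x) t2 xs := by
  simp [chainPts]

lemma IS_chainPts_length (t1 t2 : FTerm) (xs : List ℕ) :
    (chainPts t1 t2 xs).length = xs.length + 2 := by
  simp [chainPts]

lemma IS_chainTerms_length (t2 : FTerm) (xs : List ℕ) : ∀ t1,
    (chainTerms t1 t2 xs).length = xs.length + 1 := by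
  induction xs with
  | nil => intro t1; rfl
  | cons x rest ih => intro t1; simp only [chainTerms, List.length_cons, ih]

lemma IS_chainPts_getD_zero (t1 t2 : FTerm) (xs : List ℕ) :
    (chainPts t1 t2 xs).getD 0 default = t1 := by
  simp [chainPts]

lemma IS_chainTerms_get (t2 : FTerm) (xs : List ℕ) : ∀ (t1 : FTerm) (j : ℕ),
    j < xs.length + 1 →
    (chainTerms t1 t2 xs)[j]?
      = some ((chainPts t1 t2 xs).getD j default, (chainPts t1 t2 xs).getD (j+1) default) := by
  induction xs with
  | nil =>
    intro t1 j hj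
    have hj0 : j = 0 := by simpa using hj
    subst hj0
    simp [chainTerms, chainPts]
  | cons x rest ih =>
    intro t1 j hj
    rw [IS_chainPts_cons]
    cases j with
    | zero =>
      show ((t1, FTerm.var x) :: chainTerms (FTerm.var x) t2 rest)[0]? = _
      rw [List.getD_cons_zero, List.getD_cons_succ, IS_chainPts_getD_zero]
      rfl
    | succ j' =>
      have hj' : j' < rest.length + 1 := by
        simp only [List.length_cons] at hj; omega
      show ((t1, FTerm.var x) :: chainTerms (FTerm.var x) t2 rest)[j' + 1]? = _
      rw [List.getElem?_cons_succ, List.getD_cons_succ, List.getD_cons_succ]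
      exact ih (FTerm.var x) j' hj'

lemma IS_mem_chainPts {t1 t2 t : FTerm} {xs : List ℕ} (h : t ∈ chainPts t1 t2 xs) :
    t = t1 ∨ t = t2 ∨ ∃ x ∈ xs, t = FTerm.var x := by
  simp only [chainPts, List.mem_cons, List.mem_append, List.mem_map,
    List.mem_singleton, List.not_mem_nil, or_false] at h
  rcases h with h | h | h
  · exact Or.inl h
  · obtain ⟨x, hx, hxt⟩ := h
    exact Or.inr (Or.inr ⟨x, hx, hxt.symm⟩)
  · exact Or.inr (Or.inl h)

lemma IS_chainPts_getD_mem (t1 t2 : FTerm) (xs : List ℕ) (j : ℕ)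
    (h : j < xs.length + 2) :
    (chainPts t1 t2 xs).getD j default ∈ chainPts t1 t2 xs := by
  have hlen : j < (chainPts t1 t2 xs).length := by rw [IS_chainPts_length]; omega
  rw [List.getD_eq_getElem _ _ hlen]
  exact List.getElem_mem hlen

lemma IS_slotAtoms_get (n : ℕ) (t1 t2 : FTerm) (xs : List ℕ)
    (es : List (Option (FAtom × (ℕ → ℕ)))) (j : ℕ)
    (hj : j < xs.length + 1) (hlen : es.length = xs.length + 1) :
    (slotAtoms n t1 t2 xs es)[j]?
      = some ((es.getD j none).map fun aρ =>
          instDefAtom aρ.1 ((chainPts t1 t2 xs).getD j default)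
            ((chainPts t1 t2 xs).getD (j+1) default) aρ.2) := by
  unfold slotAtoms
  have hzlen : j < ((chainTerms t1 t2 xs).zip es).length := by
    rw [List.length_zip, IS_chainTerms_length, hlen]; omega
  have hctlen : j < (chainTerms t1 t2 xs).length := by rw [IS_chainTerms_length]; omega
  have heslen : j < es.length := by omega
  rw [List.getElem?_map, List.getElem?_eq_getElem hzlen]
  rw [List.getElem_zip]
  have hct : (chainTerms t1 t2 xs)[j] =
      ((chainPts t1 t2 xs).getD j default, (chainPts t1 t2 xs).getD (j+1) default) := by
    have := IS_chainTerms_get t2 xs t1 j hj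
    rw [List.getElem?_eq_getElem hctlen] at this
    exact Option.some.inj this
  rw [List.getD_eq_getElem _ _ heslen]
  simp [hct]
/-! #### Rule helpers -/

lemma IS_mem_atomsVars_single {b : FAtom} {w : ℕ} :
    w ∈ atomsVars [b] ↔ FTerm.var w ∈ b.args := by
  simp [atomsVars]

lemma IS_mem_varList_atom {b : FAtom} {w : ℕ} :
    w ∈ (PAtom.atom b).varList ↔ FTerm.var w ∈ b.args := by
  simp only [PAtom.varList, PAtom.terms, List.mem_filterMap]
  constructor
  · rintro ⟨t, ht, hmt⟩
    cases t with
    | var v => simp at hmt; subst hmt; exact ht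
    | const c => simp at hmt
  · intro h; exact ⟨FTerm.var w, h, rfl⟩

lemma IS_mem_varList_rep {p : ℕ} {u v : FTerm} {w : ℕ} :
    w ∈ (PAtom.rep p u v).varList ↔ (FTerm.var w = u ∨ FTerm.var w = v) := by
  simp only [PAtom.varList, PAtom.terms, List.mem_filterMap]
  constructor
  · rintro ⟨t, ht, hmt⟩
    cases t with
    | var v' =>
      simp at hmt; subst hmt
      simp at ht
      rcases ht with h | h
      · exact Or.inl h
      · exact Or.inr h
    | const c => simp at hmt
  · rintro (h | h)
    · exact ⟨u, by simp, by rw [← h]⟩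
    · exact ⟨v, by simp, by rw [← h]⟩

lemma IS_exV_mem {R : PRule} {z : ℕ} :
    z ∈ R.exV ↔ z ∈ atomsVars R.head ∧ z ∉ R.pbody.varList := Iff.rfl

lemma IS_toPRule_cases (tp : List ℕ) (r : ERule) (hr : isLinearRule r) :
    (toPRule tp r).head = r.head ∧
    ((∃ b, r.body = [b] ∧ (toPRule tp r).pbody = PAtom.atom b) ∨
     (∃ p u v, r.body = [⟨p, [u, v]⟩] ∧ p ∈ tp ∧ (toPRule tp r).pbody = PAtom.rep p u v)) := by
  obtain ⟨⟨b, hb⟩, _⟩ := hr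
  obtain ⟨bp, bargs⟩ := b
  by_cases hp : bp ∈ tp
  · match bargs with
    | [u, v] =>
      constructor
      · simp [toPRule, hb]
      · exact Or.inr ⟨bp, u, v, hb, hp, by simp [toPRule, hb, hp]⟩
    | [] => exact ⟨by simp [toPRule, hb], Or.inl ⟨_, hb, by simp [toPRule, hb, hp]⟩⟩
    | [u] => exact ⟨by simp [toPRule, hb], Or.inl ⟨_, hb, by simp [toPRule, hb, hp]⟩⟩
    | u :: v :: w :: rest => exact ⟨by simp [toPRule, hb], Or.inl ⟨_, hb, by simp [toPRule, hb, hp]⟩⟩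
  · exact ⟨by simp [toPRule, hb], Or.inl ⟨_, hb, by simp [toPRule, hb, hp]⟩⟩

lemma IS_trans_of (I : Interp) (RT : List ERule) (tp : List ℕ)
    (hRTsat : ∀ r ∈ RT, r.sat I) (htp : transPredsOf RT tp) {k : ℕ} (hk : k ∈ tp) :
    ∀ a b c : I.Dom, I.rel k [a, b] → I.rel k [b, c] → I.rel k [a, c] := by
  intro a b c hab hbc
  obtain ⟨r, hrRT, x, y, z, hxy, hyz, hxz, hbody, hhead⟩ := (htp k).1 hk
  have hsat := hRTsat r hrRT
  set ν : ℕ → I.Dom := fun v => if v = x then a else if v = y then b else if v = z then c else a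
    with hν
  have hνx : ν x = a := by simp [hν]
  have hνy : ν y = b := by
    show (if y = x then a else if y = y then b else if y = z then c else a) = b
    rw [if_neg (fun h => hxy h.symm), if_pos rfl]
  have hνz : ν z = c := by
    show (if z = x then a else if z = y then b else if z = z then c else a) = c
    rw [if_neg (fun h => hxz h.symm), if_neg (fun h => hyz h.symm), if_pos rfl]
  have hbodysat : ∀ a' ∈ r.body, a'.sat I ν := by
    intro a' ha'
    rw [hbody] at ha'
    simp only [List.mem_cons, List.not_mem_nil, or_false] at ha'
    rcases ha' with h | h
    · subst h
      show I.rel k ([FTerm.var x, FTerm.var y].map (FTerm.eval I ν))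
      simp only [List.map_cons, List.map_nil, FTerm.eval]
      rw [hνx, hνy]; exact hab
    · subst h
      show I.rel k ([FTerm.var y, FTerm.var z].map (FTerm.eval I ν))
      simp only [List.map_cons, List.map_nil, FTerm.eval]
      rw [hνy, hνz]; exact hbc
  obtain ⟨ν', hagree, hheadsat⟩ := hsat ν hbodysat
  have hx : x ∈ atomsVars r.body := by
    refine ⟨⟨k, [FTerm.var x, FTerm.var y]⟩, ?_, ?_⟩
    · rw [hbody]; exact List.mem_cons_self
    · simp
  have hz : z ∈ atomsVars r.body := by
    refine ⟨⟨k, [FTerm.var y, FTerm.var z]⟩, ?_, ?_⟩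
    · rw [hbody]; exact List.mem_cons_of_mem _ List.mem_cons_self
    · simp
  have hthis : I.rel k ([FTerm.var x, FTerm.var z].map (FTerm.eval I ν')) :=
    hheadsat ⟨k, [FTerm.var x, FTerm.var z]⟩ (by rw [hhead]; exact List.mem_singleton.2 rfl)
  simp only [List.map_cons, List.map_nil] at hthis
  show I.rel k [a, c]
  have hevx : FTerm.eval I ν' (FTerm.var x) = a := by
    show ν' x = a
    rw [hagree x hx, hνx]
  have hevz : FTerm.eval I ν' (FTerm.var z) = c := by
    show ν' z = c
    rw [hagree z hz, hνz]
  rw [hevx, hevz] at hthis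
  exact hthis

lemma IS_fire (I : Interp) (r : ERule) (hsat : r.sat I) (b : FAtom) (hb : r.body = [b])
    (ν : ℕ → I.Dom) (hbsat : b.sat I ν) :
    ∃ ν', (∀ w, FTerm.var w ∈ b.args → ν' w = ν w) ∧ ∀ h ∈ r.head, h.sat I ν' := by
  obtain ⟨ν', hagree, hh⟩ := hsat ν (by rw [hb]; intro a ha; simp at ha; subst ha; exact hbsat)
  refine ⟨ν', fun w hw => hagree w ?_, hh⟩
  rw [hb]
  exact IS_mem_atomsVars_single.2 hw
/-! #### The chain context -/

def IS_pts (xs : List ℕ) (j : ℕ) : FTerm :=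
  (chainPts (FTerm.var 0) (FTerm.var 1) xs).getD j default

structure IS_Ctx (I : Interp) (P : PDefs) where
  n : ℕ
  hd : FAtom
  xs : List ℕ
  σ : ℕ → FTerm
  Qp : List FAtom
  s : ℕ
  e : ℕ
  exv : Set ℕ
  bvars : Set ℕ
  hse : s < e
  hee : e ≤ xs.length + 1
  hxs : ∀ x ∈ xs, x ≠ 0 ∧ x ≠ 1
  hslot : ∀ j, s ≤ j → j < e → ∃ d ρ, d ∈ defAtoms P n ∧
      instDefAtom d (IS_pts xs j) (IS_pts xs (j+1)) ρ ∈ Qp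
  hunif : ∀ a ∈ Qp, a.subst σ = hd.subst σ
  hfixs : FTerm.subst σ (IS_pts xs s) = IS_pts xs s
  hfixe : FTerm.subst σ (IS_pts xs e) = IS_pts xs e
  hneq : IS_pts xs s ≠ IS_pts xs e
  hprot : ∀ z ∈ exv, IS_pts xs s ≠ σ z ∧ IS_pts xs e ≠ σ z
  hhdvars : ∀ t ∈ hd.args, ∃ w, t = FTerm.var w ∧ (w ∈ exv ∨ w ∈ bvars)
  hbool : ∀ d ∈ defAtoms P n, FTerm.var 0 ∈ d.args ∧ FTerm.var 1 ∈ d.args ∧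
      ∀ t ∈ d.args, t = FTerm.var 0 ∨ t = FTerm.var 1
  hSem : ∀ d ∈ defAtoms P n, ∀ θ : ℕ → I.Dom, d.sat I θ → I.rel n [θ 0, θ 1]

def IS_Ctx.usT {I : Interp} {P : PDefs} (C : IS_Ctx I P) : FTerm := IS_pts C.xs C.s

def IS_Ctx.ueT {I : Interp} {P : PDefs} (C : IS_Ctx I P) : FTerm := IS_pts C.xs C.e

lemma IS_instDefAtom_args_bool (d : FAtom) (t1 t2 : FTerm) (ρ : ℕ → ℕ)
    (hb : ∀ t ∈ d.args, t = FTerm.var 0 ∨ t = FTerm.var 1) :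
    (instDefAtom d t1 t2 ρ).args = d.args.map (fun t => if t = FTerm.var 0 then t1 else t2) := by
  show (d.args.map _) = _
  apply List.map_congr_left
  intro t ht
  rcases hb t ht with h | h <;> subst h <;> simp [FTerm.subst]

lemma IS_instDefAtom_pred (d : FAtom) (t1 t2 : FTerm) (ρ : ℕ → ℕ) :
    (instDefAtom d t1 t2 ρ).pred = d.pred := rfl

namespace IS_Ctx

variable {I : Interp} {P : PDefs} (C : IS_Ctx I P)

lemma slot_img (j : ℕ) (hj1 : C.s ≤ j) (hj2 : j < C.e) :
    (∃ t ∈ C.hd.args, FTerm.subst C.σ t = FTerm.subst C.σ (IS_pts C.xs j)) ∧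
    (∃ t ∈ C.hd.args, FTerm.subst C.σ t = FTerm.subst C.σ (IS_pts C.xs (j+1))) ∧
    (∀ t ∈ C.hd.args, FTerm.subst C.σ t = FTerm.subst C.σ (IS_pts C.xs j) ∨
      FTerm.subst C.σ t = FTerm.subst C.σ (IS_pts C.xs (j+1))) := by
  obtain ⟨d, ρ, hdm, hcj⟩ := C.hslot j hj1 hj2
  obtain ⟨h0, h1, hbo⟩ := C.hbool d hdm
  have hargs := IS_instDefAtom_args_bool d (IS_pts C.xs j) (IS_pts C.xs (j+1)) ρ hbo
  have hsub := C.hunif _ hcj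
  have hmap : (instDefAtom d (IS_pts C.xs j) (IS_pts C.xs (j+1)) ρ).args.map (FTerm.subst C.σ)
      = C.hd.args.map (FTerm.subst C.σ) := by
    have := congrArg FAtom.args hsub
    rwa [IS_subst_args, IS_subst_args] at this
  rw [hargs, List.map_map] at hmap
  refine ⟨?_, ?_, ?_⟩
  · have hm : FTerm.subst C.σ (IS_pts C.xs j) ∈ C.hd.args.map (FTerm.subst C.σ) := by
      rw [← hmap]
      refine List.mem_map.2 ⟨FTerm.var 0, h0, ?_⟩
      simp
    obtain ⟨t, ht, hteq⟩ := List.mem_map.1 hm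
    exact ⟨t, ht, hteq⟩
  · have hm : FTerm.subst C.σ (IS_pts C.xs (j+1)) ∈ C.hd.args.map (FTerm.subst C.σ) := by
      rw [← hmap]
      refine List.mem_map.2 ⟨FTerm.var 1, h1, ?_⟩
      simp
    obtain ⟨t, ht, hteq⟩ := List.mem_map.1 hm
    exact ⟨t, ht, hteq⟩
  · intro t ht
    have hm : FTerm.subst C.σ t ∈ d.args.map (FTerm.subst C.σ ∘ fun t =>
        if t = FTerm.var 0 then IS_pts C.xs j else IS_pts C.xs (j+1)) := by
      rw [hmap]
      exact List.mem_map.2 ⟨t, ht, rfl⟩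
    obtain ⟨t', ht', hteq⟩ := List.mem_map.1 hm
    rcases hbo t' ht' with h | h <;> subst h <;> simp at hteq
    · exact Or.inl hteq.symm
    · exact Or.inr hteq.symm

lemma us_wit : ∃ t ∈ C.hd.args, FTerm.subst C.σ t = C.usT := by
  obtain ⟨⟨t, ht, hteq⟩, _, _⟩ := C.slot_img C.s le_rfl C.hse
  exact ⟨t, ht, by rw [hteq, C.hfixs]; rfl⟩

lemma ue_wit : ∃ t ∈ C.hd.args, FTerm.subst C.σ t = C.ueT := by
  have hse' := C.hse
  have h1 : C.s ≤ C.e - 1 := by omega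
  have h2 : C.e - 1 < C.e := by omega
  obtain ⟨_, ⟨t, ht, hteq⟩, _⟩ := C.slot_img (C.e - 1) h1 h2
  have he1 : C.e - 1 + 1 = C.e := by omega
  rw [he1] at hteq
  exact ⟨t, ht, by rw [hteq, C.hfixe]; rfl⟩

lemma usT_ne_ueT : C.usT ≠ C.ueT := C.hneq

lemma slot_pin (j : ℕ) (hj1 : C.s ≤ j) (hj2 : j < C.e) :
    (FTerm.subst C.σ (IS_pts C.xs j) = C.usT ∧ FTerm.subst C.σ (IS_pts C.xs (j+1)) = C.ueT) ∨
    (FTerm.subst C.σ (IS_pts C.xs j) = C.ueT ∧ FTerm.subst C.σ (IS_pts C.xs (j+1)) = C.usT) := by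
  obtain ⟨_, _, himg⟩ := C.slot_img j hj1 hj2
  obtain ⟨tu, htu, htueq⟩ := C.us_wit
  obtain ⟨te, hte, hteeq⟩ := C.ue_wit
  have hu := himg tu htu
  have hev := himg te hte
  rw [htueq] at hu
  rw [hteeq] at hev
  have hne := C.usT_ne_ueT
  rcases hu with hu | hu <;> rcases hev with hev | hev
  · exact absurd (hu.trans hev.symm) hne
  · exact Or.inl ⟨hu.symm, hev.symm⟩
  · exact Or.inr ⟨hev.symm, hu.symm⟩
  · exact absurd (hu.trans hev.symm) hne

lemma hd_img (t : FTerm) (ht : t ∈ C.hd.args) :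
    FTerm.subst C.σ t = C.usT ∨ FTerm.subst C.σ t = C.ueT := by
  obtain ⟨_, _, himg⟩ := C.slot_img C.s le_rfl C.hse
  rcases C.slot_pin C.s le_rfl C.hse with ⟨h1, h2⟩ | ⟨h1, h2⟩ <;>
    rcases himg t ht with h | h <;> rw [h]
  · exact Or.inl h1
  · exact Or.inr h2
  · exact Or.inr h1
  · exact Or.inl h2

lemma hd_front (t : FTerm) (ht : t ∈ C.hd.args) :
    ∃ w, t = FTerm.var w ∧ w ∈ C.bvars ∧ FTerm.subst C.σ t = C.σ w := by
  obtain ⟨w, hw, hcase⟩ := C.hhdvars t ht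
  rcases hcase with hz | hb
  · exfalso
    obtain ⟨hp1, hp2⟩ := C.hprot w hz
    rcases C.hd_img t ht with h | h
    · rw [hw] at h
      exact hp1 h.symm
    · rw [hw] at h
      exact hp2 h.symm
  · exact ⟨w, hw, hb, by rw [hw]; rfl⟩

lemma chain (V : FTerm → I.Dom) (ν'' : ℕ → I.Dom)
    (hhdsat : C.hd.sat I ν'')
    (hV : ∀ t ∈ C.hd.args, FTerm.eval I ν'' t = V (FTerm.subst C.σ t))
    (htr : ∀ a b c : I.Dom, I.rel C.n [a, b] → I.rel C.n [b, c] → I.rel C.n [a, c]) :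
    I.rel C.n [V C.usT, V C.ueT] := by
  have hedge : ∀ j, C.s ≤ j → j < C.e →
      I.rel C.n [V (FTerm.subst C.σ (IS_pts C.xs j)), V (FTerm.subst C.σ (IS_pts C.xs (j+1)))] := by
    intro j hj1 hj2
    obtain ⟨d, ρ, hdmem, hcj⟩ := C.hslot j hj1 hj2
    obtain ⟨h0, h1, hbo⟩ := C.hbool d hdmem
    set ωj : ℕ → I.Dom := fun v => if v = 0 then V (FTerm.subst C.σ (IS_pts C.xs j))
      else V (FTerm.subst C.σ (IS_pts C.xs (j+1))) with hωj
    have hsat : d.sat I ωj := by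
      show I.rel d.pred (d.args.map (FTerm.eval I ωj))
      have hpred : d.pred = C.hd.pred := by
        have := congrArg FAtom.pred (C.hunif _ hcj)
        rw [IS_subst_pred, IS_subst_pred, IS_instDefAtom_pred] at this
        exact this
      have hmap : (instDefAtom d (IS_pts C.xs j) (IS_pts C.xs (j+1)) ρ).args.map (FTerm.subst C.σ)
          = C.hd.args.map (FTerm.subst C.σ) := by
        have := congrArg FAtom.args (C.hunif _ hcj)
        rwa [IS_subst_args, IS_subst_args] at this
      rw [IS_instDefAtom_args_bool d _ _ ρ hbo, List.map_map] at hmap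
      have htuple : d.args.map (FTerm.eval I ωj) = C.hd.args.map (FTerm.eval I ν'') := by
        have e1 : d.args.map (FTerm.eval I ωj)
            = d.args.map (fun t => V (FTerm.subst C.σ
                ((fun t => if t = FTerm.var 0 then IS_pts C.xs j else IS_pts C.xs (j+1)) t))) := by
          apply List.map_congr_left
          intro t ht
          rcases hbo t ht with h | h <;> subst h
          · show ωj 0 = V (FTerm.subst C.σ (if (FTerm.var 0 : FTerm) = FTerm.var 0
              then IS_pts C.xs j else IS_pts C.xs (j+1)))
            rw [if_pos rfl]
            simp [hωj]
          · show ωj 1 = V (FTerm.subst C.σ (if (FTerm.var 1 : FTerm) = FTerm.var 0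
              then IS_pts C.xs j else IS_pts C.xs (j+1)))
            rw [if_neg (by simp)]
            simp [hωj]
        have e2 : C.hd.args.map (FTerm.eval I ν'')
            = C.hd.args.map (fun t => V (FTerm.subst C.σ t)) := by
          apply List.map_congr_left
          intro t ht
          exact hV t ht
        rw [e1, e2]
        have h3 := congrArg (List.map V) hmap
        rw [List.map_map, List.map_map] at h3
        exact h3
      rw [hpred, htuple]
      exact hhdsat
    have hrel := C.hSem d hdmem ωj hsat
    simpa [hωj] using hrel
  have hcomp : ∀ j, C.s < j → j ≤ C.e →
      I.rel C.n [V (FTerm.subst C.σ (IS_pts C.xs C.s)), V (FTerm.subst C.σ (IS_pts C.xs j))] := by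
    intro j
    induction j with
    | zero => intro h _; exact absurd h (Nat.not_lt_zero _)
    | succ j' ih =>
      intro hj1 hj2
      by_cases hj' : C.s < j'
      · exact htr _ _ _ (ih hj' (by omega)) (hedge j' (by omega) (by omega))
      · have hjs : j' = C.s := by omega
        rw [hjs]
        exact hedge C.s le_rfl (by omega)
  have hfin := hcomp C.e C.hse le_rfl
  rw [C.hfixs, C.hfixe] at hfin
  exact hfin

end IS_Ctx
/-! #### Invariant -/

def IS_GoodAtom (I : Interp) (plus : ℕ → ℕ) (k : ℕ) (a : FAtom) : Prop :=
  (∀ q, a.pred ≠ plus q) ∧ FTerm.var 0 ∈ a.args ∧ FTerm.var 1 ∈ a.args ∧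
  (∀ t ∈ a.args, t = FTerm.var 0 ∨ t = FTerm.var 1) ∧
  (∀ θ : ℕ → I.Dom, a.sat I θ → I.rel k [θ 0, θ 1])

def IS_Inv (I : Interp) (plus : ℕ → ℕ) (tp : List ℕ) (P : PDefs) : Prop :=
  ∀ pd ∈ P, pd.1 ∈ tp ∧ ∀ a ∈ pd.2, IS_GoodAtom I plus pd.1 a

lemma IS_Inv_defAtoms {I : Interp} {plus : ℕ → ℕ} {tp : List ℕ} {P : PDefs} {k : ℕ} {a : FAtom}
    (h : IS_Inv I plus tp P) (ha : a ∈ defAtoms P k) : IS_GoodAtom I plus k a := by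
  obtain ⟨l, hl, hal⟩ := IS_mem_defAtoms ha
  exact (h _ hl).2 a hal

lemma IS_Inv_key {I : Interp} {plus : ℕ → ℕ} {tp : List ℕ} {P : PDefs} {k : ℕ} {a : FAtom}
    (h : IS_Inv I plus tp P) (ha : a ∈ defAtoms P k) : k ∈ tp := by
  obtain ⟨l, hl, _⟩ := IS_mem_defAtoms ha
  exact (h _ hl).1

lemma IS_mem_atomsTerms_append {l1 l2 : List FAtom} {t : FTerm} :
    t ∈ atomsTerms (l1 ++ l2) ↔ ∃ a, (a ∈ l1 ∨ a ∈ l2) ∧ t ∈ a.args := by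
  constructor
  · rintro ⟨a, ha, hta⟩
    exact ⟨a, List.mem_append.1 ha, hta⟩
  · rintro ⟨a, ha, hta⟩
    exact ⟨a, List.mem_append.2 ha, hta⟩

/-! #### Redirecting a unifier -/

lemma IS_redirect_unifier (ctx : PCQ) (R : PRule) (u : CtxUnifier ctx R) (c : ℕ) (X : FTerm)
    (hnc : ∀ t, (∃ a, (a ∈ u.Qp ∨ a ∈ u.Hp) ∧ t ∈ a.args) → ∀ k, t ≠ FTerm.const k)
    (hσnc : ∀ t, (∃ a, (a ∈ u.Qp ∨ a ∈ u.Hp) ∧ t ∈ a.args) → FTerm.subst u.σ t ≠ FTerm.const c)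
    (hexnc : ∀ z ∈ R.exV, u.σ z ≠ FTerm.const c) :
    ∃ u' : CtxUnifier ctx R, u'.Qp = u.Qp ∧ u'.Hp = u.Hp ∧
      ∀ v, u'.σ v = (fun x => if x = X then FTerm.const c else x) (u.σ v) := by
  classical
  set m : FTerm → FTerm := fun x => if x = X then FTerm.const c else x with hm
  set σ' : ℕ → FTerm := fun v => m (u.σ v) with hσ'
  have hinj : ∀ x y : FTerm, x ≠ FTerm.const c → y ≠ FTerm.const c → m x = m y → x = y := by
    intro x y hx hy hxy
    by_cases hxX : x = X <;> by_cases hyX : y = X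
    · rw [hxX, hyX]
    · rw [hm] at hxy; simp only [hxX, if_pos rfl, if_neg hyX] at hxy
      exact absurd hxy.symm hy
    · rw [hm] at hxy; simp only [hyX, if_pos rfl, if_neg hxX] at hxy
      exact absurd hxy hx
    · rw [hm] at hxy; simp only [if_neg hxX, if_neg hyX] at hxy
      exact hxy
  have hQ' : ∀ b ∈ u.Qp, b.subst σ' = (b.subst u.σ).mapTerms m := by
    intro b hb
    exact IS_subst_mcomp u.σ σ' m (fun v => rfl) b (fun t ht k => hnc t ⟨b, Or.inl hb, ht⟩ k)
  have hH' : ∀ b ∈ u.Hp, b.subst σ' = (b.subst u.σ).mapTerms m := by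
    intro b hb
    exact IS_subst_mcomp u.σ σ' m (fun v => rfl) b (fun t ht k => hnc t ⟨b, Or.inr hb, ht⟩ k)
  have hvσnc : ∀ (v : ℕ), (∃ a, (a ∈ u.Qp ∨ a ∈ u.Hp) ∧ FTerm.var v ∈ a.args) →
      u.σ v ≠ FTerm.const c := by
    intro v hv
    exact hσnc (FTerm.var v) hv
  refine ⟨⟨u.Qp, u.Hp, σ', u.Qp_ne, u.Qp_sub, u.Hp_sub, ?_, ?_, ?_⟩, rfl, rfl, fun v => rfl⟩
  · -- unif
    ext x
    simp only [Set.mem_setOf_eq]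
    constructor
    · rintro ⟨b, hb, rfl⟩
      have hmem : b.subst u.σ ∈ {x : FAtom | ∃ b ∈ u.Qp, x = b.subst u.σ} := ⟨b, hb, rfl⟩
      rw [u.unif] at hmem
      obtain ⟨h, hh, heq⟩ := hmem
      exact ⟨h, hh, by rw [hH' h hh, hQ' b hb, heq]⟩
    · rintro ⟨h, hh, rfl⟩
      have hmem : h.subst u.σ ∈ {x : FAtom | ∃ b ∈ u.Hp, x = b.subst u.σ} := ⟨h, hh, rfl⟩
      rw [← u.unif] at hmem
      obtain ⟨b, hb, heq⟩ := hmem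
      exact ⟨b, hb, by rw [hQ' b hb, hH' h hh, heq]⟩
  · -- exCond
    intro z hz t ht hteq htne
    cases t with
    | const k =>
      exfalso
      obtain ⟨a, ha, hta⟩ := IS_mem_atomsTerms_append.1 ht
      exact hnc _ ⟨a, ha, hta⟩ k rfl
    | var v =>
      have h1 : u.σ v ≠ FTerm.const c := by
        apply hvσnc
        obtain ⟨a, ha, hta⟩ := IS_mem_atomsTerms_append.1 ht
        exact ⟨a, ha, hta⟩
      have h2 : u.σ z ≠ FTerm.const c := hexnc z hz
      have h3 : u.σ v = u.σ z := hinj _ _ h1 h2 hteq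
      exact u.exCond z hz (FTerm.var v) ht h3 htne
  · -- singlePiece
    rintro ⟨Qs, hQsne, hQssub, hssub, hex'⟩
    apply u.singlePiece
    refine ⟨Qs, hQsne, hQssub, hssub, ?_⟩
    intro z hz t ht hteq htne
    have ht' : t ∈ atomsTerms (u.Qp ++ u.Hp) := by
      obtain ⟨a, ha, hta⟩ := IS_mem_atomsTerms_append.1 ht
      rcases ha with ha | ha
      · exact IS_mem_atomsTerms_append.2 ⟨a, Or.inl (hQssub a ha), hta⟩
      · exact IS_mem_atomsTerms_append.2 ⟨a, Or.inr ha, hta⟩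
    cases t with
    | const k =>
      exfalso
      obtain ⟨a, ha, hta⟩ := IS_mem_atomsTerms_append.1 ht'
      exact hnc _ ⟨a, ha, hta⟩ k rfl
    | var v =>
      refine hex' z hz (FTerm.var v) ht ?_ htne
      show m (u.σ v) = m (u.σ z)
      rw [show FTerm.subst u.σ (FTerm.var v) = u.σ v from rfl] at hteq
      rw [hteq]
/-! #### Positional chain lemmas and constant bookkeeping -/

lemma IS_chainPts_getD_mid (t2 : FTerm) (xs : List ℕ) : ∀ (t1 : FTerm) (j : ℕ),
    1 ≤ j → j ≤ xs.length →
    ∃ x ∈ xs, (chainPts t1 t2 xs).getD j default = FTerm.var x := by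
  induction xs with
  | nil => intro t1 j h1 h2; simp at h2; omega
  | cons x rest ih =>
    intro t1 j h1 h2
    rw [IS_chainPts_cons]
    obtain ⟨j', rfl⟩ : ∃ j', j = j' + 1 := ⟨j - 1, by omega⟩
    rw [List.getD_cons_succ]
    by_cases hj0 : j' = 0
    · subst hj0
      exact ⟨x, by simp, IS_chainPts_getD_zero _ _ _⟩
    · have h2' : j' ≤ rest.length := by simpa using h2
      obtain ⟨x', hx', hval⟩ := ih (FTerm.var x) j' (by omega) h2'
      exact ⟨x', by simp [hx'], hval⟩

lemma IS_chainPts_getD_last (t2 : FTerm) (xs : List ℕ) : ∀ (t1 : FTerm),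
    (chainPts t1 t2 xs).getD (xs.length + 1) default = t2 := by
  induction xs with
  | nil => intro t1; rfl
  | cons x rest ih =>
    intro t1
    rw [IS_chainPts_cons]
    show (t1 :: chainPts (FTerm.var x) t2 rest).getD (rest.length + 1 + 1) default = t2
    rw [List.getD_cons_succ]
    exact ih (FTerm.var x)

def IS_constsOf (t : FTerm) : List ℕ := match t with | .const k => [k] | _ => []

def IS_badList (Pf : PDefs) (L : List FTerm) : List ℕ :=
  (Pf.flatMap fun pd => pd.2.flatMap fun a => a.args.flatMap IS_constsOf) ++ L.flatMap IS_constsOf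

lemma IS_le_foldr_max (l : List ℕ) : ∀ k ∈ l, k ≤ l.foldr max 0 := by
  induction l with
  | nil => intro k hk; simp at hk
  | cons a rest ih =>
    intro k hk
    rcases List.mem_cons.1 hk with h | h
    · subst h; exact le_max_left _ _
    · exact le_trans (ih k h) (le_max_right _ _)

lemma IS_badList_Pf {Pf : PDefs} {L : List FTerm} {k c : ℕ} {a : FAtom} {l : List FAtom}
    (hpd : (k, l) ∈ Pf) (ha : a ∈ l) (hc : FTerm.const c ∈ a.args) :
    c ∈ IS_badList Pf L := by
  apply List.mem_append_left
  rw [List.mem_flatMap]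
  refine ⟨(k, l), hpd, ?_⟩
  rw [List.mem_flatMap]
  refine ⟨a, ha, ?_⟩
  rw [List.mem_flatMap]
  exact ⟨FTerm.const c, hc, by simp [IS_constsOf]⟩

lemma IS_badList_L {Pf : PDefs} {L : List FTerm} {c : ℕ}
    (hc : FTerm.const c ∈ L) : c ∈ IS_badList Pf L := by
  apply List.mem_append_right
  rw [List.mem_flatMap]
  exact ⟨FTerm.const c, hc, by simp [IS_constsOf]⟩

lemma IS_slotAtoms_length (n : ℕ) (t1 t2 : FTerm) (xs : List ℕ)
    (es : List (Option (FAtom × (ℕ → ℕ)))) (hlen : es.length = xs.length + 1) :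
    (slotAtoms n t1 t2 xs es).length = xs.length + 1 := by
  unfold slotAtoms
  rw [List.length_map, List.length_zip, IS_chainTerms_length, hlen]
  omega

lemma IS_pcqVars_Q0 (n : ℕ) (v : ℕ) (hv : v = 0 ∨ v = 1) :
    v ∈ pcqVars [PAtom.rep n (FTerm.var 0) (FTerm.var 1)] := by
  refine ⟨PAtom.rep n (FTerm.var 0) (FTerm.var 1), by simp, ?_⟩
  rcases hv with h | h <;> subst h <;> simp [PAtom.terms]
lemma IS_getD_mem_es {es : List (Option (FAtom × (ℕ → ℕ)))} {j : ℕ} {dρ : FAtom × (ℕ → ℕ)}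
    (hj : j < es.length) (h : es.getD j none = some dρ) : some dρ ∈ es := by
  rw [List.getD_eq_getElem _ _ hj] at h
  rw [← h]
  exact List.getElem_mem hj

lemma IS_slot_decode (n : ℕ) (xs : List ℕ) (es : List (Option (FAtom × (ℕ → ℕ))))
    (hlen : es.length = xs.length + 1) (j : ℕ) (a : FAtom) (hj : j < xs.length + 1)
    (hget : (slotAtoms n (FTerm.var 0) (FTerm.var 1) xs es)[j]? = some (some a)) :
    ∃ d ρ, es.getD j none = some (d, ρ) ∧ a = instDefAtom d (IS_pts xs j) (IS_pts xs (j+1)) ρ := by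
  rw [IS_slotAtoms_get n _ _ xs es j hj hlen] at hget
  have h2 := Option.some.inj hget
  rcases hmo : es.getD j none with _ | ⟨d, ρ⟩
  · rw [hmo] at h2; simp at h2
  · rw [hmo] at h2
    simp only [Option.map_some] at h2
    exact ⟨d, ρ, rfl, (Option.some.inj h2).symm⟩

lemma IS_rewrite_analysis
    (I : Interp) (plus : ℕ → ℕ) (tp : List ℕ) (RL : List ERule)
    (hRL : ∀ r ∈ RL, isLinearRule r)
    (Pf : PDefs)
    (hclose : ∀ P', DefStep (RL.map (toPRule tp)) Pf P' →
        ∀ k, ∀ a ∈ defAtoms P' k, ∃ b ∈ defAtoms Pf k, isoDefAtom a b)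
    (P : PDefs)
    (hsub : ∀ k, (defAtoms P k).Sublist (defAtoms Pf k))
    (hInv : IS_Inv I plus tp P)
    (n : ℕ) (R : PRule) (hRmem : R ∈ RL.map (toPRule tp)) (P' : PDefs)
    (hrw : IsDefRewriting P n R P') :
    ∃ C : IS_Ctx I P, C.n = n ∧ R.head = [C.hd] ∧
      C.exv = R.exV ∧ C.bvars = {w | w ∈ R.pbody.varList} ∧
      P' = updateDef P n (newAtomsFor P R C.σ C.usT C.ueT) ∧
      (∃ w0, C.usT = FTerm.var w0) ∧ (∃ w1, C.ueT = FTerm.var w1) ∧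
      C.usT ≠ FTerm.var 1 ∧ C.ueT ≠ FTerm.var 0 ∧
      (∀ b, R.pbody = PAtom.atom b →
        ∀ t ∈ b.args, FTerm.subst C.σ t = C.usT ∨ FTerm.subst C.σ t = C.ueT) := by
  classical
  obtain ⟨r, hrRL, hreq⟩ := List.mem_map.1 hRmem
  have hlin := hRL r hrRL
  obtain ⟨hheadeq, hbodycases⟩ := IS_toPRule_cases tp r hlin
  rw [hreq] at hheadeq hbodycases
  obtain ⟨hd, hhd, μ, hIOI, n', t1, t2, xs, es, s, e, hint, hfs, hfe, hP'⟩ := hrw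
  obtain ⟨hq, he, hQget, hEget, hQpall, hse, hee, hiff, hneqσ, hprotσ⟩ := hint
  have hQget' : PAtom.rep n (FTerm.var 0) (FTerm.var 1) = PAtom.rep n' t1 t2 := hQget
  injection hQget' with e1 e2 e3
  subst e1; subst e2; subst e3
  -- well-formedness of the instantiation
  have hwf := μ.T.wf 0 hq he
  rw [hQget, hEget] at hwf
  have hwf' : PExp.repE xs es = PExp.leaf ∨ ∃ xs' es', PExp.repE xs es = PExp.repE xs' es' ∧
      es'.length = xs'.length + 1 ∧ xs'.Nodup ∧
      ∀ o ∈ es', ∀ a ρ, o = some (a, ρ) → a ∈ defAtoms P n ∧ Function.Injective ρ := hwf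
  rcases hwf' with hleaf | ⟨xs', es', heq, hlen, hnodup, hcond⟩
  · exact absurd hleaf (by simp)
  · injection heq with e4 e5
    subst e4; subst e5
    -- freshness of chain variables
    have hxs : ∀ x ∈ xs, x ≠ 0 ∧ x ≠ 1 := by
      intro x hx
      have hexps : μ.T.exps = [PExp.repE xs es] := by
        obtain ⟨a, ha⟩ := List.length_eq_one_iff.1
          (show μ.T.exps.length = 1 by rw [μ.T.len]; rfl)
        have hg : μ.T.exps[0]? = some (PExp.repE xs es) :=
          List.getElem?_eq_some_iff.2 ⟨he, hEget⟩
        rw [ha] at hg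
        have : a = PExp.repE xs es := Option.some.inj hg
        rw [ha, this]
      have hfr := μ.T.fresh x
      rw [hexps] at hfr
      have hmem : x ∈ (([PExp.repE xs es].map PExp.newVars).flatten) := by
        simp [PExp.newVars]
        exact Or.inl hx
      have hnot := hfr hmem
      constructor
      · intro h0; exact hnot (by rw [h0]; exact IS_pcqVars_Q0 n 0 (Or.inl rfl))
      · intro h1; exact hnot (by rw [h1]; exact IS_pcqVars_Q0 n 1 (Or.inr rfl))
    -- decode Qp members
    have hQpshape : ∀ a ∈ μ.u.Qp, ∃ j d ρ, j < xs.length + 1 ∧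
        es.getD j none = some (d, ρ) ∧ d ∈ defAtoms P n ∧
        a = instDefAtom d (IS_pts xs j) (IS_pts xs (j+1)) ρ := by
      intro a ha
      have hmem := hQpall a ha
      obtain ⟨j, hget⟩ := List.mem_iff_getElem?.1 hmem
      have hjlt : j < xs.length + 1 := by
        have := List.getElem?_eq_some_iff.1 hget
        obtain ⟨hlt, _⟩ := this
        rwa [IS_slotAtoms_length n _ _ xs es hlen] at hlt
      obtain ⟨d, ρ, hdρ, haeq⟩ := IS_slot_decode n xs es hlen j a hjlt hget
      have hdm : d ∈ defAtoms P n :=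
        (hcond (some (d, ρ)) (IS_getD_mem_es (by omega) hdρ) d ρ rfl).1
      exact ⟨j, d, ρ, hjlt, hdρ, hdm, haeq⟩
    -- per-slot data
    have hslotdata : ∀ j, s ≤ j → j < e → ∃ d ρ, d ∈ defAtoms P n ∧
        instDefAtom d (IS_pts xs j) (IS_pts xs (j+1)) ρ ∈ μ.u.Qp := by
      intro j hj1 hj2
      have hjlt : j < xs.length + 1 := by omega
      obtain ⟨a, haQp, hget⟩ := (hiff j hjlt).2 ⟨hj1, hj2⟩
      obtain ⟨d, ρ, hdρ, haeq⟩ := IS_slot_decode n xs es hlen j a hjlt hget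
      have hdm : d ∈ defAtoms P n :=
        (hcond (some (d, ρ)) (IS_getD_mem_es (by omega) hdρ) d ρ rfl).1
      exact ⟨d, ρ, hdm, by rw [← haeq]; exact haQp⟩
    -- unification with the head
    have hhdHp : ∀ a ∈ μ.u.Qp, a.subst μ.u.σ = hd.subst μ.u.σ := by
      intro a ha
      have hmem : a.subst μ.u.σ ∈ {x : FAtom | ∃ b ∈ μ.u.Qp, x = b.subst μ.u.σ} := ⟨a, ha, rfl⟩
      rw [μ.u.unif] at hmem
      obtain ⟨h, hh, heq2⟩ := hmem
      have := μ.u.Hp_sub h hh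
      rw [hhd] at this
      simp at this
      rw [heq2, this]
    -- head variables
    have hrhead : r.head = [hd] := by rw [← hheadeq, hhd]
    have hhdvars : ∀ t ∈ hd.args, ∃ w, t = FTerm.var w ∧ (w ∈ R.exV ∨ w ∈ {w | w ∈ R.pbody.varList}) := by
      intro t ht
      have hnc := hlin.2 t ⟨hd, by rw [List.mem_append, hrhead]; exact Or.inr (by simp), ht⟩
      cases t with
      | const k => exact absurd rfl (hnc k)
      | var w =>
        refine ⟨w, rfl, ?_⟩
        by_cases hb : w ∈ R.pbody.varList
        · exact Or.inr hb
        · refine Or.inl ⟨⟨hd, by rw [hhd]; simp, ht⟩, hb⟩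
    -- endpoint shapes
    have hsle : s ≤ xs.length := by omega
    have husvar : ∃ w, IS_pts xs s = FTerm.var w ∧ w ≠ 1 := by
      by_cases hs0 : s = 0
      · subst hs0
        exact ⟨0, IS_chainPts_getD_zero _ _ _, by omega⟩
      · obtain ⟨x, hx, hval⟩ := IS_chainPts_getD_mid (FTerm.var 1) xs (FTerm.var 0) s (by omega) hsle
        exact ⟨x, hval, (hxs x hx).2⟩
    have huevar : ∃ w, IS_pts xs e = FTerm.var w ∧ w ≠ 0 := by
      by_cases hel : e = xs.length + 1
      · subst hel
        exact ⟨1, IS_chainPts_getD_last _ _ _, by omega⟩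
      · obtain ⟨x, hx, hval⟩ := IS_chainPts_getD_mid (FTerm.var 1) xs (FTerm.var 0) e (by omega)
          (by omega)
        exact ⟨x, hval, (hxs x hx).1⟩
    -- build the context
    have hfixs : FTerm.subst μ.u.σ (IS_pts xs s) = IS_pts xs s := hfs
    have hfixe : FTerm.subst μ.u.σ (IS_pts xs e) = IS_pts xs e := hfe
    have hneq : IS_pts xs s ≠ IS_pts xs e := by
      intro hco
      apply hneqσ
      show FTerm.subst μ.u.σ (IS_pts xs s) = FTerm.subst μ.u.σ (IS_pts xs e)
      rw [hco]
    have hprot : ∀ z ∈ R.exV, IS_pts xs s ≠ μ.u.σ z ∧ IS_pts xs e ≠ μ.u.σ z := by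
      intro z hz
      obtain ⟨h1, h2⟩ := hprotσ z hz
      constructor
      · intro hco; exact h1 (hfixs.trans hco)
      · intro hco; exact h2 (hfixe.trans hco)
    refine ⟨⟨n, hd, xs, μ.u.σ, μ.u.Qp, s, e, R.exV, {w | w ∈ R.pbody.varList},
      hse, hee, hxs, hslotdata, hhdHp, hfixs, hfixe, hneq, hprot, hhdvars,
      fun d hd' => ⟨(IS_Inv_defAtoms hInv hd').2.1, (IS_Inv_defAtoms hInv hd').2.2.1,
        (IS_Inv_defAtoms hInv hd').2.2.2.1⟩,
      fun d hd' => (IS_Inv_defAtoms hInv hd').2.2.2.2⟩, rfl, hhd, rfl, rfl, hP', ?_, ?_, ?_, ?_, ?_⟩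
    · obtain ⟨w, hw, _⟩ := husvar; exact ⟨w, hw⟩
    · obtain ⟨w, hw, _⟩ := huevar; exact ⟨w, hw⟩
    · obtain ⟨w, hw, hw1⟩ := husvar
      show IS_pts xs s ≠ FTerm.var 1
      rw [hw]; intro hco; injection hco with h; exact hw1 h
    · obtain ⟨w, hw, hw0⟩ := huevar
      show IS_pts xs e ≠ FTerm.var 0
      rw [hw]; intro hco; injection hco with h; exact hw0 h
    · -- Lemma A: boolean shape of the rewritten body, via saturation
      intro b hbatom t ht
      by_contra hcon
      push_neg at hcon
      obtain ⟨hX1, hX2⟩ := hcon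
      have hbr : r.body = [b] := by
        rcases hbodycases with ⟨b', hb', hpb⟩ | ⟨p, u, v, hb', hp, hpb⟩
        · rw [hbatom] at hpb
          injection hpb with hbb
          rw [hb', hbb]
        · rw [hbatom] at hpb
          exact absurd hpb (by simp)
      have htv : ∃ w, t = FTerm.var w := by
        cases t with
        | var w => exact ⟨w, rfl⟩
        | const k =>
          exact absurd rfl (hlin.2 (FTerm.const k)
            ⟨b, by rw [List.mem_append, hbr]; exact Or.inl (by simp), ht⟩ k)
      obtain ⟨w, rfl⟩ := htv
      -- the offending term
      set L : List FTerm := ((μ.u.Qp ++ r.head).flatMap FAtom.args).map (FTerm.subst μ.u.σ)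
        with hL
      set c : ℕ := (IS_badList Pf L).foldr max 0 + 1 with hcdef
      have hcfresh : ∀ k ∈ IS_badList Pf L, k < c := by
        intro k hk
        have := IS_le_foldr_max _ k hk
        omega
      have hmemL : ∀ (a : FAtom), (a ∈ μ.u.Qp ∨ a ∈ r.head) → ∀ t' ∈ a.args,
          FTerm.subst μ.u.σ t' ∈ L := by
        intro a ha t' ht'
        rw [hL]
        apply List.mem_map.2
        refine ⟨t', ?_, rfl⟩
        rw [List.mem_flatMap]
        exact ⟨a, List.mem_append.2 ha, ht'⟩
      have hLnc : ∀ x ∈ L, x ≠ FTerm.const c := by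
        intro x hx hco
        rw [hco] at hx
        exact absurd (hcfresh c (IS_badList_L hx)) (by omega)
      have hHp_hd : ∀ h ∈ μ.u.Hp, h = hd := by
        intro h hh
        have := μ.u.Hp_sub h hh
        rw [hhd] at this
        simpa using this
      have hQpargs_var : ∀ a ∈ μ.u.Qp, ∀ t' ∈ a.args, ∃ w', t' = FTerm.var w' := by
        intro a ha t' ht'
        obtain ⟨j, d, ρ, hj, hdρ, hdm, haeq⟩ := hQpshape a ha
        subst haeq
        have hb := (IS_Inv_defAtoms hInv hdm).2.2.2.1
        rw [IS_instDefAtom_args_bool d _ _ ρ hb] at ht'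
        obtain ⟨t0, ht0, rfl⟩ := List.mem_map.1 ht'
        have hvar : ∀ jj, jj < xs.length + 2 → ∃ w', IS_pts xs jj = FTerm.var w' := by
          intro jj hjj
          have hmem := IS_chainPts_getD_mem (FTerm.var 0) (FTerm.var 1) xs jj hjj
          rcases IS_mem_chainPts hmem with h | h | ⟨x, _, h⟩
          · exact ⟨0, h⟩
          · exact ⟨1, h⟩
          · exact ⟨x, h⟩
        by_cases h00 : t0 = FTerm.var 0
        · rw [if_pos h00]; exact hvar j (by omega)
        · rw [if_neg h00]; exact hvar (j+1) (by omega)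
      have hnc : ∀ t', (∃ a, (a ∈ μ.u.Qp ∨ a ∈ μ.u.Hp) ∧ t' ∈ a.args) →
          ∀ k, t' ≠ FTerm.const k := by
        rintro t' ⟨a, ha, ht'⟩ k hco
        rcases ha with ha | ha
        · obtain ⟨w', hw'⟩ := hQpargs_var a ha t' ht'
          rw [hco] at hw'; exact absurd hw' (by simp)
        · rw [hHp_hd a ha] at ht'
          exact hlin.2 t' ⟨hd, by rw [List.mem_append, hrhead]; exact Or.inr (by simp), ht'⟩ k hco
      have hσnc : ∀ t', (∃ a, (a ∈ μ.u.Qp ∨ a ∈ μ.u.Hp) ∧ t' ∈ a.args) →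
          FTerm.subst μ.u.σ t' ≠ FTerm.const c := by
        rintro t' ⟨a, ha, ht'⟩
        rcases ha with ha | ha
        · exact hLnc _ (hmemL a (Or.inl ha) t' ht')
        · rw [hHp_hd a ha] at ht'
          exact hLnc _ (hmemL hd (Or.inr (by rw [hrhead]; simp)) t' ht')
      have hexnc : ∀ z ∈ R.exV, μ.u.σ z ≠ FTerm.const c := by
        intro z hz
        obtain ⟨a, haR, hza⟩ := hz.1
        rw [hhd] at haR
        simp at haR
        rw [haR] at hza
        exact hLnc _ (hmemL hd (Or.inr (by rw [hrhead]; simp)) (FTerm.var z) hza)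
      obtain ⟨u', hu'Qp, hu'Hp, hu'σ⟩ :=
        IS_redirect_unifier μ.T.result R μ.u c (μ.u.σ w) hnc hσnc hexnc
      -- the instantiation replayed over Pf
      have hg0 : μ.T.exps[0]? = some (PExp.repE xs es) := List.getElem?_eq_some_iff.2 ⟨he, hEget⟩
      have hwfPf : ∀ (i : ℕ)
          (hq' : i < ([PAtom.rep n (FTerm.var 0) (FTerm.var 1)] : PCQ).length)
          (he' : i < μ.T.exps.length),
          PExpWF Pf (([PAtom.rep n (FTerm.var 0) (FTerm.var 1)] : PCQ).get ⟨i, hq'⟩)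
            (μ.T.exps.get ⟨i, he'⟩) := by
        intro i hq' he'
        have hi0 : i = 0 := by simpa using hq'
        subst hi0
        obtain ⟨hlt, hget0⟩ := List.getElem?_eq_some_iff.1 hg0
        have hget0' : μ.T.exps.get ⟨0, he'⟩ = PExp.repE xs es := hget0
        rw [hget0']
        show PExp.repE xs es = PExp.leaf ∨ _
        refine Or.inr ⟨xs, es, rfl, hlen, hnodup, fun o ho a ρ hoeq => ?_⟩
        obtain ⟨hmem, hinj⟩ := hcond o ho a ρ hoeq
        exact ⟨(hsub n).subset hmem, hinj⟩
      set T' : Instn Pf [PAtom.rep n (FTerm.var 0) (FTerm.var 1)] :=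
        ⟨μ.T.exps, μ.T.len, hwfPf, μ.T.fresh_nodup, μ.T.fresh⟩ with hT'
      set μ' : PUnifier Pf [PAtom.rep n (FTerm.var 0) (FTerm.var 1)] R := ⟨T', u'⟩ with hμ'
      -- filter facts
      obtain ⟨ds, ρs, hdsm, hcs⟩ := hslotdata s le_rfl hse
      have hdspred : ds.pred = hd.pred := by
        have h5 := congrArg FAtom.pred (hhdHp _ hcs)
        rw [IS_subst_pred, IS_subst_pred, IS_instDefAtom_pred] at h5
        exact h5
      have hfilP : ds ∈ (defAtoms P n).filter (fun a => decide (a.pred = hd.pred)) :=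
        List.mem_filter.2 ⟨hdsm, by simp [hdspred]⟩
      have hfilPf : ds ∈ (defAtoms Pf n).filter (fun a => decide (a.pred = hd.pred)) :=
        List.mem_filter.2 ⟨(hsub n).subset hdsm, by simp [hdspred]⟩
      -- IOI over Pf
      have hIOIPf : IsIOI Pf hd.pred hd.args.length μ'.T := by
        intro i hq' he'
        have hi0 : i = 0 := by simpa using hq'
        subst hi0
        constructor
        · intro n0 t10 t20 hstd
          have hstd' : PAtom.rep n (FTerm.var 0) (FTerm.var 1) = PAtom.std n0 t10 t20 := hstd
          simp at hstd'
        · intro n0 t10 t20 hrep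
          have hrep' : PAtom.rep n (FTerm.var 0) (FTerm.var 1) = PAtom.rep n0 t10 t20 := hrep
          injection hrep' with f1 f2 f3
          subst f1
          constructor
          · intro hfil
            rw [hfil] at hfilPf
            simp at hfilPf
          · intro _
            obtain ⟨h1P, h2P⟩ := hIOI 0 hq he
            obtain ⟨hfilP1, hfilP2⟩ := h2P n (FTerm.var 0) (FTerm.var 1) hQget
            obtain ⟨xs2, es2, hget2, hbound2, hpreds2⟩ :=
              hfilP2 (List.ne_nil_of_mem hfilP)
            have hrweq : PExp.repE xs es = PExp.repE xs2 es2 := by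
              rw [← hEget, hget2]
            injection hrweq with f4 f5
            subst f4; subst f5
            refine ⟨xs, es, ?_, ?_, hpreds2⟩
            · obtain ⟨hlt, hget0⟩ := List.getElem?_eq_some_iff.1 hg0
              exact hget0
            · have hcnt : ((defAtoms P n).filter (fun a => decide (a.pred = hd.pred))).length
                  ≤ ((defAtoms Pf n).filter (fun a => decide (a.pred = hd.pred))).length :=
                ((hsub n).filter _).length_le
              have hminle := min_le_min (le_refl hd.args.length) hcnt
              omega
      -- computation facts for the redirected substitution
      obtain ⟨w0, hw0, _⟩ := husvar
      obtain ⟨w1, hw1, _⟩ := huevar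
      have hσw0 : μ.u.σ w0 = IS_pts xs s := by
        calc μ.u.σ w0 = FTerm.subst μ.u.σ (FTerm.var w0) := rfl
          _ = FTerm.subst μ.u.σ (IS_pts xs s) := by rw [hw0]
          _ = IS_pts xs s := hfixs
      have hσw1 : μ.u.σ w1 = IS_pts xs e := by
        calc μ.u.σ w1 = FTerm.subst μ.u.σ (FTerm.var w1) := rfl
          _ = FTerm.subst μ.u.σ (IS_pts xs e) := by rw [hw1]
          _ = IS_pts xs e := hfixe
      have hptssX : IS_pts xs s ≠ μ.u.σ w := fun hco => hX1 hco.symm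
      have hptseX : IS_pts xs e ≠ μ.u.σ w := fun hco => hX2 hco.symm
      have hσ's : FTerm.subst u'.σ (IS_pts xs s) = IS_pts xs s := by
        rw [hw0]
        show u'.σ w0 = FTerm.var w0
        rw [hu'σ w0, hσw0]
        show (if IS_pts xs s = μ.u.σ w then FTerm.const c else IS_pts xs s) = FTerm.var w0
        rw [if_neg hptssX, hw0]
      have hσ'e : FTerm.subst u'.σ (IS_pts xs e) = IS_pts xs e := by
        rw [hw1]
        show u'.σ w1 = FTerm.var w1
        rw [hu'σ w1, hσw1]
        show (if IS_pts xs e = μ.u.σ w then FTerm.const c else IS_pts xs e) = FTerm.var w1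
        rw [if_neg hptseX, hw1]
      have hint' : μ'.internalData 0 n (FTerm.var 0) (FTerm.var 1) xs es s e := by
        refine ⟨hq, he, rfl, hEget, ?_, hse, hee, ?_, ?_, ?_⟩
        · show ∀ a ∈ u'.Qp, _
          rw [hu'Qp]
          exact hQpall
        · intro j hj
          show (∃ a ∈ u'.Qp, _) ↔ _
          rw [hu'Qp]
          exact hiff j hj
        · show FTerm.subst u'.σ (IS_pts xs s) ≠ FTerm.subst u'.σ (IS_pts xs e)
          rw [hσ's, hσ'e]
          exact hneq
        · intro z hz
          constructor
          · show FTerm.subst u'.σ (IS_pts xs s) ≠ u'.σ z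
            rw [hσ's, hu'σ z]
            by_cases hzX : μ.u.σ z = μ.u.σ w
            · rw [hw0]
              simp only [hzX, if_pos rfl]
              simp
            · simp only [if_neg hzX]
              exact (hprot z hz).1
          · show FTerm.subst u'.σ (IS_pts xs e) ≠ u'.σ z
            rw [hσ'e, hu'σ z]
            by_cases hzX : μ.u.σ z = μ.u.σ w
            · rw [hw1]
              simp only [hzX, if_pos rfl]
              simp
            · simp only [if_neg hzX]
              exact (hprot z hz).2
      have hstepPf : DefStep (RL.map (toPRule tp)) Pf
          (updateDef Pf n (newAtomsFor Pf R u'.σ (IS_pts xs s) (IS_pts xs e))) :=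
        ⟨n, R, hRmem, hd, hhd, μ', hIOIPf, n, FTerm.var 0, FTerm.var 1, xs, es, s, e,
          hint', hσ's, hσ'e, rfl⟩
      have hNA : newAtomsFor Pf R u'.σ (IS_pts xs s) (IS_pts xs e)
          = [(b.subst u'.σ).mapTerms (replExt (IS_pts xs s) (IS_pts xs e))] := by
        unfold newAtomsFor
        rw [hbatom]
      have hPfnne : defAtoms Pf n ≠ [] := List.ne_nil_of_mem ((hsub n).subset hdsm)
      have hnewc : (b.subst u'.σ).mapTerms (replExt (IS_pts xs s) (IS_pts xs e))
          ∈ defAtoms (updateDef Pf n (newAtomsFor Pf R u'.σ (IS_pts xs s) (IS_pts xs e))) n := by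
        rw [IS_defAtoms_updateDef_self Pf n _ hPfnne, hNA]
        exact List.mem_append_right _ (by simp)
      obtain ⟨b0, hb0, f, hfbij, hf0, hf1, hb0eq⟩ := hclose _ hstepPf n _ hnewc
      -- the fresh constant occurs in the new atom
      have hσ'w : u'.σ w = FTerm.const c := by
        rw [hu'σ w]
        simp
      have hca : FTerm.const c ∈ ((b.subst u'.σ).mapTerms (replExt (IS_pts xs s) (IS_pts xs e))).args := by
        rw [IS_mapTerms_args, IS_subst_args, List.map_map]
        apply List.mem_map.2
        refine ⟨FTerm.var w, ht, ?_⟩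
        show replExt (IS_pts xs s) (IS_pts xs e) (FTerm.subst u'.σ (FTerm.var w)) = FTerm.const c
        have h6 : FTerm.subst u'.σ (FTerm.var w) = FTerm.const c := hσ'w
        rw [h6]
        unfold replExt
        rw [if_neg (by rw [hw0]; simp), if_neg (by rw [hw1]; simp)]
      have hcb0 : FTerm.const c ∈ b0.args := by
        rw [hb0eq, IS_subst_args]
        exact List.mem_map.2 ⟨FTerm.const c, hca, rfl⟩
      obtain ⟨l0, hpd0, hb0l⟩ := IS_mem_defAtoms hb0
      exact absurd (hcfresh c (IS_badList_Pf hpd0 hb0l hcb0)) (by omega)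
/-! #### Preservation of the invariant -/

lemma IS_swap01_eval (I : Interp) (θ : ℕ → I.Dom) (t : FTerm) :
    FTerm.eval I θ (swap01 t)
      = FTerm.eval I (fun x => if x = 0 then θ 1 else if x = 1 then θ 0 else θ x) t := by
  cases t with
  | const k => rfl
  | var v =>
    by_cases h0 : v = 0
    · subst h0; simp [swap01, FTerm.eval]
    · by_cases h1 : v = 1
      · subst h1; simp [swap01, FTerm.eval]
      · have : FTerm.var v ≠ FTerm.var 0 := by simp [h0]
        have h2 : FTerm.var v ≠ FTerm.var 1 := by simp [h1]
        simp [swap01, this, h2, FTerm.eval, h0, h1]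

lemma IS_step_inv
    (I : Interp) (plus : ℕ → ℕ) (tp : List ℕ) (RL RT : List ERule)
    (hRL : ∀ r ∈ RL, isLinearRule r)
    (hplusR : ∀ q, plus q ∉ rulesPreds (RL ++ RT))
    (hRLsat : ∀ r ∈ RL, r.sat I)
    (hRTsat : ∀ r ∈ RT, r.sat I)
    (htp : transPredsOf RT tp)
    (Pf : PDefs)
    (hclose : ∀ P', DefStep (RL.map (toPRule tp)) Pf P' →
        ∀ k, ∀ a ∈ defAtoms P' k, ∃ b ∈ defAtoms Pf k, isoDefAtom a b)
    (P P' : PDefs)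
    (hsub : ∀ k, (defAtoms P k).Sublist (defAtoms Pf k))
    (hInv : IS_Inv I plus tp P)
    (hstep : DefStep (RL.map (toPRule tp)) P P') :
    IS_Inv I plus tp P' := by
  classical
  obtain ⟨n, R, hRmem, hrw⟩ := hstep
  obtain ⟨C, hCn, hChd, hCexv, hCbv, hCP', husv, huev, husne1, huene0, hbA⟩ :=
    IS_rewrite_analysis I plus tp RL hRL Pf hclose P hsub hInv n R hRmem P' hrw
  subst hCn
  obtain ⟨r, hrRL, hreq⟩ := List.mem_map.1 hRmem
  have hlin := hRL r hrRL
  obtain ⟨hheadeq, hbodycases⟩ := IS_toPRule_cases tp r hlin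
  rw [hreq] at hheadeq hbodycases
  have hrhead : r.head = [C.hd] := by rw [← hheadeq, hChd]
  have hdright : C.hd ∈ r.head := by rw [hrhead]; simp
  -- the pattern C.n is a transitive predicate
  have hntp : C.n ∈ tp := by
    obtain ⟨d, ρ, hdm, _⟩ := C.hslot C.s le_rfl C.hse
    exact IS_Inv_key hInv hdm
  have htr : ∀ a b c : I.Dom, I.rel C.n [a, b] → I.rel C.n [b, c] → I.rel C.n [a, c] :=
    IS_trans_of I RT tp hRTsat htp hntp
  have hne := C.usT_ne_ueT
  have hreplus : replExt C.usT C.ueT C.usT = FTerm.var 0 := by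
    unfold replExt; rw [if_pos rfl]
  have hreplue : replExt C.usT C.ueT C.ueT = FTerm.var 1 := by
    unfold replExt; rw [if_neg (Ne.symm hne), if_pos rfl]
  -- good atoms of the new batch
  have hnewgood : ∀ a ∈ newAtomsFor P R C.σ C.usT C.ueT, IS_GoodAtom I plus C.n a := by
    intro a ha
    rcases hbodycases with ⟨b, hbr, hpb⟩ | ⟨p, u, v, hbr, hptp, hpb⟩
    · -- linear rule with ordinary (or non-binary) body atom
      have hNA : newAtomsFor P R C.σ C.usT C.ueT
          = [(b.subst C.σ).mapTerms (replExt C.usT C.ueT)] := by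
        unfold newAtomsFor; rw [hpb]
      rw [hNA] at ha
      simp at ha
      subst ha
      have hbool := hbA b hpb
      have hbargsvar : ∀ t ∈ b.args, ∃ w', t = FTerm.var w' := by
        intro t ht
        cases t with
        | var w' => exact ⟨w', rfl⟩
        | const k =>
          exact absurd rfl (hlin.2 (FTerm.const k)
            ⟨b, by rw [List.mem_append, hbr]; exact Or.inl (by simp), ht⟩ k)
      have hargseq : ((b.subst C.σ).mapTerms (replExt C.usT C.ueT)).args
          = b.args.map (fun t => replExt C.usT C.ueT (FTerm.subst C.σ t)) := by
        rw [IS_mapTerms_args, IS_subst_args, List.map_map]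
        rfl
      refine ⟨?_, ?_, ?_, ?_, ?_⟩
      · -- predicate is not a plus-predicate
        intro q hq
        apply hplusR q
        refine ⟨r, by rw [List.mem_append]; exact Or.inl hrRL, ?_⟩
        refine ⟨b, by rw [List.mem_append, hbr]; exact Or.inl (by simp), ?_⟩
        rw [← hq]; rfl
      · -- var 0 occurs
        obtain ⟨t, htm, hts⟩ := C.us_wit
        obtain ⟨w, hw, hwb, hws⟩ := C.hd_front t htm
        rw [hCbv] at hwb
        have hwb' : FTerm.var w ∈ b.args := by
          have := hwb
          rw [hpb] at this
          exact IS_mem_varList_atom.1 this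
        rw [hargseq]
        refine List.mem_map.2 ⟨FTerm.var w, hwb', ?_⟩
        show replExt C.usT C.ueT (FTerm.subst C.σ (FTerm.var w)) = FTerm.var 0
        rw [show FTerm.subst C.σ (FTerm.var w) = C.usT from by rw [← hw]; exact hts]
        exact hreplus
      · -- var 1 occurs
        obtain ⟨t, htm, hts⟩ := C.ue_wit
        obtain ⟨w, hw, hwb, hws⟩ := C.hd_front t htm
        rw [hCbv] at hwb
        have hwb' : FTerm.var w ∈ b.args := by
          have := hwb
          rw [hpb] at this
          exact IS_mem_varList_atom.1 this
        rw [hargseq]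
        refine List.mem_map.2 ⟨FTerm.var w, hwb', ?_⟩
        show replExt C.usT C.ueT (FTerm.subst C.σ (FTerm.var w)) = FTerm.var 1
        rw [show FTerm.subst C.σ (FTerm.var w) = C.ueT from by rw [← hw]; exact hts]
        exact hreplue
      · -- boolean
        intro t ht
        rw [hargseq] at ht
        obtain ⟨t0, ht0, rfl⟩ := List.mem_map.1 ht
        rcases hbool t0 ht0 with h | h <;> rw [h]
        · exact Or.inl hreplus
        · exact Or.inr hreplue
      · -- semantic property
        intro θ hsat
        set E : FTerm → I.Dom := fun t => FTerm.eval I θ (replExt C.usT C.ueT t) with hE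
        set ν : ℕ → I.Dom := fun v => E (C.σ v) with hν
        have hbsat : b.sat I ν := by
          show I.rel b.pred (b.args.map (FTerm.eval I ν))
          have hsat' : I.rel b.pred
              ((b.args.map (fun t => replExt C.usT C.ueT (FTerm.subst C.σ t))).map
                (FTerm.eval I θ)) := by
            have := hsat
            show I.rel ((b.subst C.σ).mapTerms (replExt C.usT C.ueT)).pred _
            rw [← hargseq]
            exact this
          rw [List.map_map] at hsat'
          have : b.args.map (FTerm.eval I θ ∘ fun t => replExt C.usT C.ueT (FTerm.subst C.σ t))
              = b.args.map (FTerm.eval I ν) := by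
            apply List.map_congr_left
            intro t ht
            obtain ⟨w', rfl⟩ := hbargsvar t ht
            rfl
          rwa [this] at hsat'
        obtain ⟨ν'', hagr, hheads⟩ := IS_fire I r (hRLsat r hrRL) b hbr ν hbsat
        have hhdsat : C.hd.sat I ν'' := hheads C.hd hdright
        have hV : ∀ t ∈ C.hd.args, FTerm.eval I ν'' t = E (FTerm.subst C.σ t) := by
          intro t ht
          obtain ⟨w, hw, hwb, hws⟩ := C.hd_front t ht
          rw [hCbv] at hwb
          have hwb' : FTerm.var w ∈ b.args := by
            have := hwb
            rw [hpb] at this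
            exact IS_mem_varList_atom.1 this
          rw [hw]
          show ν'' w = E (FTerm.subst C.σ (FTerm.var w))
          rw [hagr w hwb']
          rfl
        have hchain := C.chain E ν'' hhdsat hV htr
        have hEus : E C.usT = θ 0 := by rw [hE]; simp only; rw [hreplus]; rfl
        have hEue : E C.ueT = θ 1 := by rw [hE]; simp only; rw [hreplue]; rfl
        rw [hEus, hEue] at hchain
        exact hchain
    · -- linear rule whose body is a transitive atom
      have hu0 : ∃ u0, u = FTerm.var u0 := by
        cases u with
        | var u0 => exact ⟨u0, rfl⟩
        | const k =>
          exact absurd rfl (hlin.2 (FTerm.const k)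
            ⟨⟨p, [FTerm.const k, v]⟩, by rw [List.mem_append, hbr]; exact Or.inl (by simp),
              by simp⟩ k)
      have hv0 : ∃ v0, v = FTerm.var v0 := by
        cases v with
        | var v0 => exact ⟨v0, rfl⟩
        | const k =>
          exact absurd rfl (hlin.2 (FTerm.const k)
            ⟨⟨p, [u, FTerm.const k]⟩, by rw [List.mem_append, hbr]; exact Or.inl (by simp),
              by simp⟩ k)
      obtain ⟨u0, rfl⟩ := hu0
      obtain ⟨v0, rfl⟩ := hv0
      -- orientation
      have hAu : FTerm.subst C.σ (FTerm.var u0) = C.usT ∨ FTerm.subst C.σ (FTerm.var v0) = C.usT := by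
        obtain ⟨t, htm, hts⟩ := C.us_wit
        obtain ⟨w, hw, hwb, hws⟩ := C.hd_front t htm
        rw [hCbv] at hwb
        have := hwb
        rw [hpb] at this
        rcases IS_mem_varList_rep.1 this with h | h
        · left; rw [← h, ← hw]; exact hts
        · right; rw [← h, ← hw]; exact hts
      have hAe : FTerm.subst C.σ (FTerm.var u0) = C.ueT ∨ FTerm.subst C.σ (FTerm.var v0) = C.ueT := by
        obtain ⟨t, htm, hts⟩ := C.ue_wit
        obtain ⟨w, hw, hwb, hws⟩ := C.hd_front t htm
        rw [hCbv] at hwb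
        have := hwb
        rw [hpb] at this
        rcases IS_mem_varList_rep.1 this with h | h
        · left; rw [← h, ← hw]; exact hts
        · right; rw [← h, ← hw]; exact hts
      have horient : (C.σ u0 = C.usT ∧ C.σ v0 = C.ueT) ∨ (C.σ u0 = C.ueT ∧ C.σ v0 = C.usT) := by
        rcases hAu with h1 | h1 <;> rcases hAe with h2 | h2
        · exact absurd (h1.symm.trans h2) hne
        · exact Or.inl ⟨h1, h2⟩
        · exact Or.inr ⟨h2, h1⟩
        · exact absurd (h1.symm.trans h2) hne
      have hu0v0 : u0 ≠ v0 := by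
        intro hco
        rcases horient with ⟨h1, h2⟩ | ⟨h1, h2⟩ <;> rw [hco] at h1
        · exact hne (h1.symm.trans h2)
        · exact hne (h2.symm.trans h1)
      have hNA : newAtomsFor P R C.σ C.usT C.ueT
          = if replExt C.usT C.ueT (FTerm.subst C.σ (FTerm.var u0)) = FTerm.var 0 ∧
               replExt C.usT C.ueT (FTerm.subst C.σ (FTerm.var v0)) = FTerm.var 1
            then defAtoms P p
            else (defAtoms P p).map (FAtom.mapTerms swap01) := by
        unfold newAtomsFor; rw [hpb]
      -- the semantic core, shared by both orientations
      have hcore : ∀ (x y : I.Dom), I.rel p [x, y] →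
          (C.σ u0 = C.usT → C.σ v0 = C.ueT → I.rel C.n [x, y]) ∧
          (C.σ u0 = C.ueT → C.σ v0 = C.usT → I.rel C.n [y, x]) := by
        intro x y hrel
        set ν : ℕ → I.Dom := fun w => if w = u0 then x else if w = v0 then y else x with hν
        have hνu : ν u0 = x := by simp [hν]
        have hνv : ν v0 = y := by
          show (if v0 = u0 then x else if v0 = v0 then y else x) = y
          rw [if_neg (fun h => hu0v0 h.symm), if_pos rfl]
        have hbsat : FAtom.sat I ν ⟨p, [FTerm.var u0, FTerm.var v0]⟩ := by
          show I.rel p ([FTerm.var u0, FTerm.var v0].map (FTerm.eval I ν))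
          simp only [List.map_cons, List.map_nil, FTerm.eval]
          rw [hνu, hνv]
          exact hrel
        obtain ⟨ν'', hagr, hheads⟩ := IS_fire I r (hRLsat r hrRL) _ hbr ν hbsat
        have hhdsat : C.hd.sat I ν'' := hheads C.hd hdright
        have hagru : ν'' u0 = x := by
          rw [hagr u0 (by simp), hνu]
        have hagrv : ν'' v0 = y := by
          rw [hagr v0 (by simp), hνv]
        constructor
        · intro hou hov
          set V : FTerm → I.Dom := fun t => if t = C.usT then x else y with hV
          have hVh : ∀ t ∈ C.hd.args, FTerm.eval I ν'' t = V (FTerm.subst C.σ t) := by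
            intro t ht
            obtain ⟨w, hw, hwb, hws⟩ := C.hd_front t ht
            rw [hCbv] at hwb
            have := hwb
            rw [hpb] at this
            rcases IS_mem_varList_rep.1 this with h | h
            · have hwu : w = u0 := by injection h
              subst hwu
              rw [hw]
              calc FTerm.eval I ν'' (FTerm.var w) = x := hagru
                _ = V C.usT := by simp [hV]
                _ = V (FTerm.subst C.σ (FTerm.var w)) := by
                    show V C.usT = V (C.σ w); rw [hou]
            · have hwv : w = v0 := by injection h
              subst hwv
              rw [hw]
              calc FTerm.eval I ν'' (FTerm.var w) = y := hagrv
                _ = V C.ueT := by simp [hV, Ne.symm hne]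
                _ = V (FTerm.subst C.σ (FTerm.var w)) := by
                    show V C.ueT = V (C.σ w); rw [hov]
          have hchain := C.chain V ν'' hhdsat hVh htr
          have h1 : V C.usT = x := by rw [hV]; simp
          have h2 : V C.ueT = y := by rw [hV]; simp [Ne.symm hne]
          rwa [h1, h2] at hchain
        · intro hou hov
          set V : FTerm → I.Dom := fun t => if t = C.usT then y else x with hV
          have hVh : ∀ t ∈ C.hd.args, FTerm.eval I ν'' t = V (FTerm.subst C.σ t) := by
            intro t ht
            obtain ⟨w, hw, hwb, hws⟩ := C.hd_front t ht
            rw [hCbv] at hwb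
            have := hwb
            rw [hpb] at this
            rcases IS_mem_varList_rep.1 this with h | h
            · have hwu : w = u0 := by injection h
              subst hwu
              rw [hw]
              calc FTerm.eval I ν'' (FTerm.var w) = x := hagru
                _ = V C.ueT := by simp [hV, Ne.symm hne]
                _ = V (FTerm.subst C.σ (FTerm.var w)) := by
                    show V C.ueT = V (C.σ w); rw [hou]
            · have hwv : w = v0 := by injection h
              subst hwv
              rw [hw]
              calc FTerm.eval I ν'' (FTerm.var w) = y := hagrv
                _ = V C.usT := by simp [hV]
                _ = V (FTerm.subst C.σ (FTerm.var w)) := by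
                    show V C.usT = V (C.σ w); rw [hov]
          have hchain := C.chain V ν'' hhdsat hVh htr
          have h1 : V C.usT = y := by rw [hV]; simp
          have h2 : V C.ueT = x := by rw [hV]; simp [Ne.symm hne]
          rwa [h1, h2] at hchain
      rcases horient with ⟨hou, hov⟩ | ⟨hou, hov⟩
      · -- forward orientation
        have hcond : replExt C.usT C.ueT (FTerm.subst C.σ (FTerm.var u0)) = FTerm.var 0 ∧
            replExt C.usT C.ueT (FTerm.subst C.σ (FTerm.var v0)) = FTerm.var 1 := by
          constructor
          · rw [show FTerm.subst C.σ (FTerm.var u0) = C.usT from hou]; exact hreplus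
          · rw [show FTerm.subst C.σ (FTerm.var v0) = C.ueT from hov]; exact hreplue
        rw [hNA, if_pos hcond] at ha
        obtain ⟨hpred, h0m, h1m, hbool, hsem⟩ := IS_Inv_defAtoms hInv ha
        refine ⟨hpred, h0m, h1m, hbool, ?_⟩
        intro θ hsat
        exact ((hcore (θ 0) (θ 1) (hsem θ hsat)).1) hou hov
      · -- swapped orientation
        have hcond : ¬(replExt C.usT C.ueT (FTerm.subst C.σ (FTerm.var u0)) = FTerm.var 0 ∧
            replExt C.usT C.ueT (FTerm.subst C.σ (FTerm.var v0)) = FTerm.var 1) := by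
          rintro ⟨h1, _⟩
          rw [show FTerm.subst C.σ (FTerm.var u0) = C.ueT from hou, hreplue] at h1
          simp at h1
        rw [hNA, if_neg hcond] at ha
        obtain ⟨d'', hd''m, rfl⟩ := List.mem_map.1 ha
        obtain ⟨hpred, h0m, h1m, hbool, hsem⟩ := IS_Inv_defAtoms hInv hd''m
        refine ⟨?_, ?_, ?_, ?_, ?_⟩
        · intro q hq; exact hpred q (by rw [← hq]; rfl)
        · rw [IS_mapTerms_args]
          refine List.mem_map.2 ⟨FTerm.var 1, h1m, ?_⟩
          simp [swap01]
        · rw [IS_mapTerms_args]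
          refine List.mem_map.2 ⟨FTerm.var 0, h0m, ?_⟩
          simp [swap01]
        · rw [IS_mapTerms_args]
          intro t ht
          obtain ⟨t0, ht0, rfl⟩ := List.mem_map.1 ht
          rcases hbool t0 ht0 with h | h <;> subst h
          · right; simp [swap01]
          · left; simp [swap01]
        · intro θ hsat
          set θ' : ℕ → I.Dom := fun x => if x = 0 then θ 1 else if x = 1 then θ 0 else θ x
            with hθ'
          have hsat' : d''.sat I θ' := by
            show I.rel d''.pred (d''.args.map (FTerm.eval I θ'))
            have : d''.args.map (FTerm.eval I θ')
                = d''.args.map (FTerm.eval I θ ∘ swap01) := by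
              apply List.map_congr_left
              intro t ht
              exact (IS_swap01_eval I θ t).symm
            rw [this, ← List.map_map, ← IS_mapTerms_args]
            exact hsat
          have hrel := hsem θ' hsat'
          have hθ'0 : θ' 0 = θ 1 := by simp [hθ']
          have hθ'1 : θ' 1 = θ 0 := by simp [hθ']
          rw [hθ'0, hθ'1] at hrel
          exact ((hcore (θ 1) (θ 0) hrel).2) hou hov
  -- assemble
  rw [hCP']
  intro pd hpd
  obtain ⟨pd₀, hpd₀, hfst, hsnd⟩ := IS_mem_updateDef hpd
  obtain ⟨htpm, hgood⟩ := hInv pd₀ hpd₀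
  refine ⟨by rw [hfst]; exact htpm, ?_⟩
  intro a ha
  rcases hsnd with h | ⟨hkey, h⟩
  · rw [h] at ha
    rw [hfst]
    exact hgood a ha
  · rw [h] at ha
    rcases List.mem_append.1 ha with h2 | h2
    · rw [hfst]
      exact hgood a h2
    · rw [hfst, hkey]
      exact hnewgood a h2
/-! #### Reachability induction -/

lemma IS_rw_updateDef {P : PDefs} {n : ℕ} {R : PRule} {P' : PDefs}
    (h : IsDefRewriting P n R P') : ∃ L, P' = updateDef P n L := by
  obtain ⟨hd, _, μ, _, n', t1, t2, xs, es, s, e, _, _, _, hP'⟩ := h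
  exact ⟨_, hP'⟩

lemma IS_DefStep_sublist {RL' : List PRule} {P P' : PDefs} (h : DefStep RL' P P') :
    ∀ k, (defAtoms P k).Sublist (defAtoms P' k) := by
  obtain ⟨n, R, _, hrw⟩ := h
  obtain ⟨L, hP'⟩ := IS_rw_updateDef hrw
  intro k
  rw [hP']
  exact IS_defAtoms_updateDef_sublist P n L k

lemma IS_RTG_sublist {RL' : List PRule} {P Pf : PDefs}
    (h : Relation.ReflTransGen (DefStep RL') P Pf) :
    ∀ k, (defAtoms P k).Sublist (defAtoms Pf k) := by
  induction h with
  | refl => intro k; exact List.Sublist.refl _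
  | tail _ hstep ih => intro k; exact (ih k).trans (IS_DefStep_sublist hstep k)

lemma IS_init_inv
    (I : Interp) (plus : ℕ → ℕ) (tp : List ℕ) (RL RT : List ERule)
    (hplusR : ∀ q, plus q ∉ rulesPreds (RL ++ RT))
    (htp : transPredsOf RT tp) :
    IS_Inv I plus tp (initDefs tp) := by
  intro pd hpd
  obtain ⟨p, hp, rfl⟩ := List.mem_map.1 hpd
  refine ⟨hp, ?_⟩
  intro a ha
  simp only [List.mem_singleton] at ha
  subst ha
  have hpreds : p ∈ rulesPreds (RL ++ RT) := by
    obtain ⟨rT, hrT, x, y, z, _, _, _, hbody, hhead⟩ := (htp p).1 hp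
    refine ⟨rT, by rw [List.mem_append]; exact Or.inr hrT, ?_⟩
    refine ⟨⟨p, [FTerm.var x, FTerm.var y]⟩, ?_, rfl⟩
    rw [List.mem_append, hbody]
    exact Or.inl (by simp)
  refine ⟨?_, by simp, by simp, by simp, ?_⟩
  · intro q hq
    have hq' : p = plus q := hq
    rw [hq'] at hpreds
    exact hplusR q hpreds
  · intro θ hsat
    exact hsat

lemma IS_inv_Pf
    (I : Interp) (plus : ℕ → ℕ) (tp : List ℕ) (RL RT : List ERule)
    (hRL : ∀ r ∈ RL, isLinearRule r)
    (hplusR : ∀ q, plus q ∉ rulesPreds (RL ++ RT))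
    (hRLsat : ∀ r ∈ RL, r.sat I)
    (hRTsat : ∀ r ∈ RT, r.sat I)
    (htp : transPredsOf RT tp)
    (Pf : PDefs) (hPf : IsSaturatedDefs tp (RL.map (toPRule tp)) Pf) :
    IS_Inv I plus tp Pf := by
  obtain ⟨hreach, hclose⟩ := hPf
  suffices h : ∀ P, Relation.ReflTransGen (DefStep (RL.map (toPRule tp))) (initDefs tp) P →
      Relation.ReflTransGen (DefStep (RL.map (toPRule tp))) P Pf → IS_Inv I plus tp P by
    exact h Pf hreach Relation.ReflTransGen.refl
  intro P hP
  induction hP with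
  | refl => intro _; exact IS_init_inv I plus tp RL RT hplusR htp
  | tail h1 hstep ih =>
    intro hcPf
    rename_i b c
    have hbPf : Relation.ReflTransGen (DefStep (RL.map (toPRule tp))) b Pf :=
      Relation.ReflTransGen.head hstep hcPf
    have hInvb := ih hbPf
    exact IS_step_inv I plus tp RL RT hRL hplusR hRLsat hRTsat htp Pf hclose b c
      (IS_RTG_sublist hbPf) hInvb hstep

end InternalSoundAux

/-- Soundness of the internal rewriting step: let `RL ∪ RT` be a
linear+trans rule set, `Pf` the set of pattern definitions computed by Step 3 of the
algorithm and `Π_P = datalogOfDefs plus Pf` its Datalog translation.  For every CQ `Q`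
over the original vocabulary and every fact base `F`:
if `F, Π_P ⊨ Q⁺⁺` then `F, RL ∪ RT ⊨ Q`. -/
theorem internal_rewriting_sound
    (RL RT : List ERule)
    (hRL : ∀ r ∈ RL, isLinearRule r) (hRT : ∀ r ∈ RT, isTransitivityRule r)
    (tp : List ℕ) (htp : transPredsOf RT tp)
    (plus : ℕ → ℕ) (hplusinj : Function.Injective plus)
    (hplusR : ∀ q, plus q ∉ rulesPreds (RL ++ RT))
    (Pf : PDefs) (hPf : IsSaturatedDefs tp (RL.map (toPRule tp)) Pf)
    (Q : List FAtom) (hQp : ∀ q, plus q ∉ atomsPreds Q)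
    (F : List FAtom) (hF : isFactBase F) (hFp : ∀ q, plus q ∉ atomsPreds F) :
    entails F (datalogOfDefs plus Pf) (toPlusCQ plus tp Q) → entails F (RL ++ RT) Q := by
  
  intro hent I hFsat hRsat
  classical
  have hRLsat : ∀ r ∈ RL, r.sat I := fun r hr => hRsat r (List.mem_append.2 (Or.inl hr))
  have hRTsat : ∀ r ∈ RT, r.sat I := fun r hr => hRsat r (List.mem_append.2 (Or.inr hr))
  have hInvf := IS_inv_Pf I plus tp RL RT hRL hplusR hRLsat hRTsat htp Pf hPf
  set I' : Interp := ⟨I.Dom, I.inh,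
    fun q l => if q ∈ Set.range plus
      then (∃ x y : I.Dom, l = [x, y] ∧ I.rel (Function.invFun plus q) [x, y])
      else I.rel q l, I.cst⟩ with hI'
  have heval : ∀ (ν : ℕ → I.Dom) (t : FTerm), FTerm.eval I' ν t = FTerm.eval I ν t := by
    intro ν t; cases t <;> rfl
  have hmapeval : ∀ (ν : ℕ → I.Dom) (l : List FTerm),
      l.map (FTerm.eval I' ν) = l.map (FTerm.eval I ν) := by
    intro ν l; exact List.map_congr_left (fun t _ => heval ν t)
  have hdecode : ∀ (p : ℕ) (l : List I.Dom),
      I'.rel (plus p) l ↔ ∃ x y, l = [x, y] ∧ I.rel p [x, y] := by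
    intro p l
    show (if plus p ∈ Set.range plus then _ else _) ↔ _
    rw [if_pos ⟨p, rfl⟩, Function.leftInverse_invFun hplusinj p]
  have hsame : ∀ q, (∀ p, q ≠ plus p) → ∀ l, I'.rel q l ↔ I.rel q l := by
    intro q hq l
    show (if q ∈ Set.range plus then _ else _) ↔ _
    rw [if_neg (by rintro ⟨p, rfl⟩; exact hq p rfl)]
  have hsatatom : ∀ (a : FAtom) (ν : ℕ → I.Dom), (∀ p, a.pred ≠ plus p) →
      (a.sat I' ν ↔ a.sat I ν) := by
    intro a ν ha
    show I'.rel a.pred (a.args.map (FTerm.eval I' ν)) ↔ _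
    rw [hmapeval]
    exact hsame a.pred ha _
  have hF' : satFacts I' F := by
    intro ν a ha
    rw [hsatatom a ν (fun p hp => hFp p ⟨a, ha, hp⟩)]
    exact hFsat ν a ha
  have hRules' : ∀ r' ∈ datalogOfDefs plus Pf, r'.sat I' := by
    intro r' hr'
    rw [datalogOfDefs, List.mem_flatMap] at hr'
    obtain ⟨pd, hpd, hr'⟩ := hr'
    obtain ⟨hpdtp, hgood⟩ := hInvf pd hpd
    have htrn := IS_trans_of I RT tp hRTsat htp hpdtp
    rcases List.mem_cons.1 hr' with hr' | hr'
    · subst hr'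
      intro ν hbody
      refine ⟨ν, fun v _ => rfl, ?_⟩
      intro h hh
      rw [show (transRule (plus pd.1)).head
          = [⟨plus pd.1, [FTerm.var 0, FTerm.var 2]⟩] from rfl] at hh
      simp only [List.mem_singleton] at hh
      subst hh
      have hb1 := hbody ⟨plus pd.1, [FTerm.var 0, FTerm.var 1]⟩ (by simp [transRule])
      have hb2 := hbody ⟨plus pd.1, [FTerm.var 1, FTerm.var 2]⟩ (by simp [transRule])
      have hd1 : I.rel pd.1 [ν 0, ν 1] := by
        obtain ⟨x, y, hl, hrel⟩ := (hdecode pd.1 [ν 0, ν 1]).1 hb1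
        obtain ⟨h1, h2⟩ : ν 0 = x ∧ ν 1 = y := by
          injection hl with ha hb; injection hb with hb _; exact ⟨ha, hb⟩
        rw [h1, h2]; exact hrel
      have hd2 : I.rel pd.1 [ν 1, ν 2] := by
        obtain ⟨x, y, hl, hrel⟩ := (hdecode pd.1 [ν 1, ν 2]).1 hb2
        obtain ⟨h1, h2⟩ : ν 1 = x ∧ ν 2 = y := by
          injection hl with ha hb; injection hb with hb _; exact ⟨ha, hb⟩
        rw [h1, h2]; exact hrel
      have hrel' := htrn _ _ _ hd1 hd2
      show I'.rel (plus pd.1) ([FTerm.var 0, FTerm.var 2].map (FTerm.eval I' ν))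
      exact (hdecode pd.1 [ν 0, ν 2]).2 ⟨ν 0, ν 2, rfl, hrel'⟩
    · obtain ⟨a, ha, rfl⟩ := List.mem_map.1 hr'
      intro ν hbody
      refine ⟨ν, fun v _ => rfl, ?_⟩
      intro h hh
      simp only [List.mem_singleton] at hh
      subst hh
      have hba : a.sat I' ν := hbody a (by simp)
      have hgood' := hgood a ha
      have hbaI : a.sat I ν := (hsatatom a ν hgood'.1).1 hba
      have hrel := hgood'.2.2.2.2 ν hbaI
      show I'.rel (plus pd.1) ([FTerm.var 0, FTerm.var 1].map (FTerm.eval I' ν))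
      exact (hdecode pd.1 [ν 0, ν 1]).2 ⟨ν 0, ν 1, rfl, hrel⟩
  obtain ⟨ν, hν⟩ := hent I' hF' hRules'
  refine ⟨ν, ?_⟩
  intro a ha
  by_cases hptp : a.pred ∈ tp
  · have hmem : (⟨plus a.pred, a.args⟩ : FAtom) ∈ toPlusCQ plus tp Q := by
      rw [toPlusCQ]
      refine List.mem_map.2 ⟨a, ha, ?_⟩
      rw [if_pos hptp]
    have hsat' := hν _ hmem
    have hsat'' : I'.rel (plus a.pred) (a.args.map (FTerm.eval I' ν)) := hsat'
    rw [hmapeval] at hsat''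
    obtain ⟨x, y, hl, hrel⟩ := (hdecode a.pred _).1 hsat''
    show I.rel a.pred (a.args.map (FTerm.eval I ν))
    rw [hl]
    exact hrel
  · have hmem : a ∈ toPlusCQ plus tp Q := by
      rw [toPlusCQ]
      refine List.mem_map.2 ⟨a, ha, ?_⟩
      rw [if_neg hptp]
    have hsat' := hν _ hmem
    exact (hsatatom a ν (fun p hp => hQp p ⟨a, ha, hp⟩)).1 hsat'
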